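/- arXiv:1402.2317 — 9 statements merged into one kernel-verified Lean document; each statement's English description precedes it below -/
import Mathlib

section
/- Let f : S¹ → S¹ be a continuous map of degree d with |d| > 1, and let F : ℝ → ℝ be a lift of f (so π₀ ∘ F = f ∘ π₀ where π₀(x) = exp(2πix)). Then there exists a continuous map H : ℝ → ℝ such that H(x+1) = H(x) + 1 for all x, H ∘ F = d·H, and the function x ↦ |H(x) − x| is bounded on ℝ. -/
noncomputable section

/-- The circle `S¹ = ℝ/ℤ`. -/
abbrev S1 := AddCircle (1 : ℝ)

/-- The universal covering projection `π₀ : ℝ → S¹`. -/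
def proj : ℝ → S1 := fun x => (x : S1)

/-- for a continuous degree-`d` map `f` of the circle (`|d| > 1`) with
lift `F`, there is a continuous `H : ℝ → ℝ` with `H(x+1) = H(x)+1`, `H ∘ F = d·H`,
and `x ↦ |H x - x|` bounded. -/
theorem exists_semiconjugating_lift
    (d : ℤ) (hd : 1 < |d|)
    (f : S1 → S1) (hf : Continuous f)
    (F : ℝ → ℝ) (hF : Continuous F)
    (hlift : ∀ x : ℝ, proj (F x) = f (proj x))
    (hdeg : ∀ x : ℝ, F (x + 1) = F x + d) :
    ∃ H : ℝ → ℝ, Continuous H ∧ (∀ x, H (x + 1) = H x + 1) ∧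
      (∀ x, H (F x) = (d : ℝ) * H x) ∧ ∃ M : ℝ, ∀ x, |H x - x| ≤ M := by
  set D : ℝ := (d : ℝ) with hD
  have hD2 : (2 : ℝ) ≤ |D| := by
    have h2 : (2 : ℤ) ≤ |d| := hd
    calc (2:ℝ) = ((2:ℤ):ℝ) := by norm_num
    _ ≤ ((|d|:ℤ):ℝ) := by exact_mod_cast h2
    _ = |D| := by push_cast; rfl
  have hDne : D ≠ 0 := by
    intro h; rw [h, abs_zero] at hD2; linarith
  have hDpow : ∀ n : ℕ, (D : ℝ) ^ n ≠ 0 := fun n => pow_ne_zero n hDne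
  -- the displacement function G
  set G : ℝ → ℝ := fun x => F x - D * x with hGdef
  have hGcont : Continuous G := hF.sub (continuous_const.mul continuous_id)
  have hGper : Function.Periodic G 1 := by
    intro x
    simp only [hGdef, hdeg x]
    ring
  have hGint : ∀ (m : ℤ) (y : ℝ), G (y + m) = G y := by
    intro m y
    simpa using (hGper.int_mul m) y
  -- G is bounded
  obtain ⟨C, hC⟩ : ∃ C : ℝ, ∀ x, |G x| ≤ C := by
    obtain ⟨C, hC⟩ := (isCompact_Icc (a := (0:ℝ)) (b := 1)).exists_bound_of_continuousOn
      hGcont.continuousOn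
    refine ⟨C, fun x => ?_⟩
    have h1 : G x = G (Int.fract x) := by
      have := hGint ⌊x⌋ (Int.fract x)
      rw [Int.fract_add_floor x] at this
      exact this
    rw [h1]
    have := hC (Int.fract x) ⟨(Int.fract_nonneg x), (Int.fract_lt_one x).le⟩
    simpa using this
  have hC0 : 0 ≤ C := le_trans (abs_nonneg _) (hC 0)
  -- iterates shift by powers of d
  have hiter : ∀ (n : ℕ) (x : ℝ) (k : ℤ), F^[n] (x + k) = F^[n] x + (d ^ n * k : ℤ) := by
    intro n
    induction n with
    | zero => intro x k; simp
    | succ n ih =>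
        -- first: F (y + k) = F y + d * k for all integers k
        have hFk : ∀ (y : ℝ) (k : ℤ), F (y + k) = F y + (d * k : ℤ) := by
          intro y k
          have := hGint k y
          simp only [hGdef] at this
          push_cast
          push_cast at this
          nlinarith [this]
        intro x k
        rw [Function.iterate_succ_apply', Function.iterate_succ_apply', ih x k, hFk]
        push_cast
        ring
  -- the series terms
  set u : ℕ → ℝ := fun n => C * (|D|⁻¹) ^ (n + 1) with hu
  set T : ℕ → ℝ → ℝ := fun n x => G (F^[n] x) / D ^ (n + 1) with hT
  have hr0 : (0:ℝ) ≤ |D|⁻¹ := inv_nonneg.2 (abs_nonneg _)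
  have hr1 : |D|⁻¹ < 1 := by
    rw [inv_lt_one_iff₀]; right; linarith
  have husum : Summable u := by
    have h := (summable_geometric_of_lt_one hr0 hr1).mul_left (C * |D|⁻¹)
    refine h.congr fun n => ?_
    simp only [hu]
    ring
  have hTbound : ∀ (n : ℕ) (x : ℝ), ‖T n x‖ ≤ u n := by
    intro n x
    simp only [hT, hu, Real.norm_eq_abs, abs_div, abs_pow]
    rw [div_eq_mul_inv, ← inv_pow]
    have h1 : |G (F^[n] x)| ≤ C := hC _
    have h2 : (0:ℝ) ≤ (|D|⁻¹) ^ (n+1) := pow_nonneg hr0 _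
    exact mul_le_mul_of_nonneg_right h1 h2
  have hTcont : ∀ n, Continuous (T n) :=
    fun n => (hGcont.comp (hF.iterate n)).div_const _
  have hTsum : ∀ x, Summable (fun n => T n x) :=
    fun x => Summable.of_norm_bounded husum (fun n => hTbound n x)
  -- define H
  set H : ℝ → ℝ := fun x => x + ∑' n, T n x with hHdef
  refine ⟨H, ?_, ?_, ?_, ?_⟩
  · exact continuous_id.add (continuous_tsum hTcont husum hTbound)
  · -- periodicity
    intro x
    have hTper : ∀ n, T n (x + 1) = T n x := by
      intro n
      simp only [hT]
      have := hiter n x 1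
      push_cast at this
      rw [show x + 1 = x + ((1:ℤ):ℝ) by norm_num, hiter n x 1]
      rw [hGint]
    simp only [hHdef]
    rw [tsum_congr hTper]
    ring
  · -- semiconjugacy
    intro x
    have hkey : ∀ n, D * T (n + 1) x = T n (F x) := by
      intro n
      simp only [hT, Function.iterate_succ_apply, pow_succ]
      field_simp
    have h0 : D * T 0 x = G x := by
      simp only [hT, pow_one]
      field_simp
      simp
    have hsum2 : Summable (fun n => D * T n x) := (hTsum x).mul_left D
    have : D * H x = H (F x) := by
      calc D * H x = D * x + ∑' n, D * T n x := by
              simp only [hHdef]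
              rw [tsum_mul_left]
              ring
        _ = D * x + (G x + ∑' n, D * T (n + 1) x) := by
              rw [Summable.tsum_eq_zero_add hsum2, h0]
        _ = F x + ∑' n, T n (F x) := by
              rw [tsum_congr hkey]
              simp only [hGdef]
              ring
        _ = H (F x) := rfl
    exact this.symm
  · -- boundedness
    refine ⟨∑' n, u n, fun x => ?_⟩
    have : |H x - x| = ‖∑' n, T n x‖ := by
      simp only [hHdef, Real.norm_eq_abs, add_sub_cancel_left]
    rw [this]
    exact tsum_of_norm_bounded husum.hasSum (fun n => hTbound n x)
end
end

section
/- Let f : S¹ → S¹ be a continuous map of degree d with |d| > 1 and F a lift of f. The map T on the complete metric space H⁺ = {H : ℝ → ℝ continuous, H(x+1) = H(x)+1} with sup-metric, defined by T(H)(x) = H(F(x))/d, is a contraction with Lipschitz constant 1/|d|, and hence has a unique fixed point. -/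
noncomputable section

/-- Membership in the space `ℋ⁺` of continuous maps `H : ℝ → ℝ` with `H(x+1) = H(x)+1`. -/
def MemHplus (H : ℝ → ℝ) : Prop := Continuous H ∧ ∀ x, H (x + 1) = H x + 1

/-- The operator `T(H)(x) = H(F(x))/d`. -/
def Toper (F : ℝ → ℝ) (d : ℤ) (H : ℝ → ℝ) : ℝ → ℝ := fun x => H (F x) / d

/-- For `H ∈ ℋ⁺`, the function `H - id` is 1-periodic. -/
lemma periodic_sub_id {H : ℝ → ℝ} (hH : ∀ x, H (x + 1) = H x + 1) :
    Function.Periodic (fun x => H x - x) 1 := by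
  intro x
  have := hH x
  simp only [Function.Periodic]
  linarith [hH x]

lemma add_int_eq {H : ℝ → ℝ} (hH : ∀ x, H (x + 1) = H x + 1) (n : ℤ) (x : ℝ) :
    H (x + n) = H x + n := by
  have h := ((periodic_sub_id hH).int_mul n) x
  simp only [mul_one] at h
  linarith [h]

/-- the operator `T` preserves `ℋ⁺`, contracts the sup-metric with
Lipschitz constant `1/|d|`, and has a unique fixed point in `ℋ⁺`. -/
theorem contraction_and_unique_fixed_point
    (d : ℤ) (hd : 1 < |d|)
    (f : S1 → S1) (hf : Continuous f)
    (F : ℝ → ℝ) (hF : Continuous F)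
    (hlift : ∀ x : ℝ, proj (F x) = f (proj x))
    (hdeg : ∀ x : ℝ, F (x + 1) = F x + d) :
    (∀ H, MemHplus H → MemHplus (Toper F d H)) ∧
    (∀ H₁ H₂, MemHplus H₁ → MemHplus H₂ → ∀ C : ℝ,
      (∀ x, |H₁ x - H₂ x| ≤ C) →
      ∀ x, |Toper F d H₁ x - Toper F d H₂ x| ≤ (1 / |(d : ℝ)|) * C) ∧
    (∃! H : ℝ → ℝ, MemHplus H ∧ Toper F d H = H) := by
  have hd0 : (d : ℝ) ≠ 0 := by
    have : d ≠ 0 := by rintro rfl; simp at hd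
    exact_mod_cast this
  have habs : (1 : ℝ) < |(d : ℝ)| := by
    have : ((1 : ℤ) : ℝ) < (|d| : ℝ) := by exact_mod_cast hd
    simpa [Int.cast_abs] using this
  have habs0 : (0 : ℝ) < |(d : ℝ)| := by linarith
  -- Part 1 : T preserves ℋ⁺
  have part1 : ∀ H, MemHplus H → MemHplus (Toper F d H) := by
    intro H ⟨hHc, hHp⟩
    refine ⟨(hHc.comp hF).div_const _, fun x => ?_⟩
    simp only [Toper, hdeg x, add_int_eq hHp d (F x)]
    field_simp
  -- Part 2 : contraction estimate
  have part2 : ∀ H₁ H₂, MemHplus H₁ → MemHplus H₂ → ∀ C : ℝ,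
      (∀ x, |H₁ x - H₂ x| ≤ C) →
      ∀ x, |Toper F d H₁ x - Toper F d H₂ x| ≤ (1 / |(d : ℝ)|) * C := by
    intro H₁ H₂ _ _ C hC x
    have : |Toper F d H₁ x - Toper F d H₂ x| = |H₁ (F x) - H₂ (F x)| / |(d : ℝ)| := by
      simp [Toper, div_sub_div_same, abs_div]
    rw [this, one_div_mul_eq_div, div_le_div_iff_of_pos_right habs0]
    exact hC (F x)
  refine ⟨part1, part2, ?_⟩
  -- Part 3 : unique fixed point via Banach
  -- the closed subspace of 1-periodic bounded continuous functions
  set s : Set (BoundedContinuousFunction ℝ ℝ) := {g | ∀ x, g (x + 1) = g x} with hs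
  have hclosed : IsClosed s := by
    have : s = ⋂ x : ℝ, {g : BoundedContinuousFunction ℝ ℝ | g (x + 1) = g x} := by
      ext g; simp [hs, Set.mem_iInter]
    rw [this]
    exact isClosed_iInter fun x =>
      isClosed_eq (continuous_eval_const (x + 1))
        (continuous_eval_const x)
  haveI : CompleteSpace s := hclosed.completeSpace_coe
  haveI : Nonempty s := ⟨⟨0, by simp [hs]⟩⟩
  -- turn a continuous 1-periodic function into a bounded continuous one
  have mkper : ∀ (g : ℝ → ℝ), Continuous g → (∀ x, g (x + 1) = g x) →
      ∃ gb : s, ⇑(gb : BoundedContinuousFunction ℝ ℝ) = g := by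
    intro g hgc hgp
    have hper : Function.Periodic g 1 := hgp
    obtain ⟨C, hC⟩ := isBounded_iff_forall_norm_le.1
      (hper.isBounded_of_continuous one_ne_zero hgc)
    exact ⟨⟨BoundedContinuousFunction.ofNormedAddCommGroup g hgc C
      (fun x => hC _ ⟨x, rfl⟩), fun x => by simp [hs, hgp x]⟩, rfl⟩
  -- the operator induced on s by T
  have Scont : ∀ g : s, Continuous fun x : ℝ =>
      (F x + (g : BoundedContinuousFunction ℝ ℝ) (F x)) / d - x := fun g =>
    ((hF.add ((g : BoundedContinuousFunction ℝ ℝ).continuous.comp hF)).div_const _).sub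
      continuous_id
  have Sper : ∀ g : s, ∀ x : ℝ,
      (F (x + 1) + (g : BoundedContinuousFunction ℝ ℝ) (F (x + 1))) / d - (x + 1)
        = (F x + (g : BoundedContinuousFunction ℝ ℝ) (F x)) / d - x := by
    intro g x
    have hper : Function.Periodic (fun y => (g : BoundedContinuousFunction ℝ ℝ) y) 1 :=
      fun y => g.2 y
    have h1 : (g : BoundedContinuousFunction ℝ ℝ) (F x + (d : ℝ))
        = (g : BoundedContinuousFunction ℝ ℝ) (F x) := by
      simpa using (hper.int_mul d) (F x)
    rw [hdeg x, h1]
    field_simp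
    ring
  let Φ : s → s := fun g => (mkper _ (Scont g) (Sper g)).choose
  have hΦ : ∀ g : s, ⇑((Φ g : s) : BoundedContinuousFunction ℝ ℝ)
      = fun x : ℝ => (F x + (g : BoundedContinuousFunction ℝ ℝ) (F x)) / d - x :=
    fun g => (mkper _ (Scont g) (Sper g)).choose_spec
  -- contraction
  set K : NNReal := ⟨1 / |(d : ℝ)|, by positivity⟩ with hK
  have hKlt : K < 1 := by
    rw [← NNReal.coe_lt_coe]
    show 1 / |(d : ℝ)| < 1
    rw [div_lt_one habs0]
    exact habs
  have hcontr : ContractingWith K Φ := by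
    refine ⟨hKlt, LipschitzWith.of_dist_le_mul fun g₁ g₂ => ?_⟩
    rw [Subtype.dist_eq]
    have h0 : (0 : ℝ) ≤ (K : ℝ) * dist g₁ g₂ := by positivity
    rw [BoundedContinuousFunction.dist_le h0]
    intro x
    have hpt : dist ((g₁ : BoundedContinuousFunction ℝ ℝ) (F x))
        ((g₂ : BoundedContinuousFunction ℝ ℝ) (F x))
        ≤ dist (g₁ : BoundedContinuousFunction ℝ ℝ) (g₂ : BoundedContinuousFunction ℝ ℝ) :=
      BoundedContinuousFunction.dist_coe_le_dist _
    have heq : dist (((Φ g₁ : s) : BoundedContinuousFunction ℝ ℝ) x)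
        (((Φ g₂ : s) : BoundedContinuousFunction ℝ ℝ) x)
        = dist ((g₁ : BoundedContinuousFunction ℝ ℝ) (F x))
          ((g₂ : BoundedContinuousFunction ℝ ℝ) (F x)) / |(d : ℝ)| := by
      rw [hΦ g₁, hΦ g₂]
      simp only [Real.dist_eq]
      rw [← abs_div]
      congr 1
      field_simp
      ring
    rw [heq]
    have hKd : (K : ℝ) = 1 / |(d : ℝ)| := rfl
    have hdist : dist g₁ g₂
        = dist (g₁ : BoundedContinuousFunction ℝ ℝ) (g₂ : BoundedContinuousFunction ℝ ℝ) :=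
      Subtype.dist_eq g₁ g₂
    rw [hdist, hKd, one_div_mul_eq_div]
    exact div_le_div_of_nonneg_right hpt habs0.le
  -- the fixed point
  set G : s := hcontr.fixedPoint Φ with hG
  have hGfix : Φ G = G := hcontr.fixedPoint_isFixedPt
  have hGeq : ∀ x : ℝ, (G : BoundedContinuousFunction ℝ ℝ) x
      = (F x + (G : BoundedContinuousFunction ℝ ℝ) (F x)) / d - x := by
    intro x
    conv_lhs => rw [← hGfix]
    rw [hΦ G]
  refine ⟨fun x => x + (G : BoundedContinuousFunction ℝ ℝ) x, ⟨⟨?_, ?_⟩, ?_⟩, ?_⟩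
  · exact continuous_id.add (G : BoundedContinuousFunction ℝ ℝ).continuous
  · intro x
    have := G.2 x
    simp only [this]
    ring
  · funext x
    have := hGeq x
    simp only [Toper]
    linarith [hGeq x]
  · rintro H' ⟨⟨hc, hp⟩, hfix'⟩
    obtain ⟨gb, hgb⟩ := mkper (fun x => H' x - x) (hc.sub continuous_id)
      (fun x => by have := periodic_sub_id hp x; simpa using this)
    have hgbfix : Φ gb = gb := by
      apply Subtype.ext
      apply BoundedContinuousFunction.ext
      intro x
      rw [hΦ gb]
      simp only [hgb]
      have hT : H' (F x) / d = H' x := congrFun hfix' x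
      have h2 : F x + (H' (F x) - F x) = H' (F x) := by ring
      rw [h2, hT]
    have : gb = G := hcontr.fixedPoint_unique hgbfix
    funext x
    have hx : (gb : BoundedContinuousFunction ℝ ℝ) x = H' x - x := congrFun hgb x
    have hx2 : (gb : BoundedContinuousFunction ℝ ℝ) x
        = (G : BoundedContinuousFunction ℝ ℝ) x := by rw [this]
    linarith [hx, hx2]
end
end

section
/- Let f : S¹ → S¹ be a continuous map of degree d, |d| > 1, F a lift of f, and H ∈ H⁺ the unique fixed point of the operator T(H) = (H∘F)/d. Then for every x ∈ ℝ, H(x) = lim_{n→∞} Fⁿ(x)/dⁿ. In particular this limit (the rotation number of x) exists for every point x. -/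
noncomputable section

open Filter Topology

/-- if `H` is the fixed point of `T(H) = (H∘F)/d` in `ℋ⁺`, then
`H(x) = lim Fⁿ(x)/dⁿ` for every `x`; in particular the rotation number exists
at every point. -/
theorem fixed_point_is_rotation_number
    (d : ℤ) (hd : 1 < |d|)
    (f : S1 → S1) (hf : Continuous f)
    (F : ℝ → ℝ) (hF : Continuous F)
    (hlift : ∀ x : ℝ, proj (F x) = f (proj x))
    (hdeg : ∀ x : ℝ, F (x + 1) = F x + d)
    (H : ℝ → ℝ) (hH : Continuous H) (hper : ∀ x, H (x + 1) = H x + 1)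
    (hfix : ∀ x, H (F x) / d = H x) :
    ∀ x : ℝ, Tendsto (fun n : ℕ => F^[n] x / (d : ℝ) ^ n) atTop (𝓝 (H x)) := by
  have hd0 : (d : ℝ) ≠ 0 := by
    have : (1 : ℤ) < |d| := hd
    intro h
    simp [Int.cast_eq_zero.mp h] at this
  -- bound on |H y - y|
  have hgper : Function.Periodic (fun y => H y - y) 1 := by
    intro y; simp [hper y]
  have hbdd := (hgper.isBounded_of_continuous one_ne_zero (hH.sub continuous_id))
  obtain ⟨C, hC⟩ := isBounded_iff_forall_norm_le.mp hbdd
  have hCb : ∀ y : ℝ, |H y - y| ≤ C := fun y => hC _ (Set.mem_range_self y)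
  -- H (F^[n] x) = d^n * H x
  have key : ∀ (n : ℕ) (x : ℝ), H (F^[n] x) = (d : ℝ) ^ n * H x := by
    intro n
    induction n with
    | zero => intro x; simp
    | succ n ih =>
      intro x
      rw [Function.iterate_succ_apply',
        (div_eq_iff hd0).mp (hfix (F^[n] x)), ih x, pow_succ]
      ring
  intro x
  have habs : (1:ℝ) < |(d:ℝ)| := by exact_mod_cast hd
  -- squeeze
  have hlim : Tendsto (fun n : ℕ => C * (1 / |(d:ℝ)|) ^ n) atTop (𝓝 0) := by
    have : Tendsto (fun n : ℕ => (1 / |(d:ℝ)|) ^ n) atTop (𝓝 0) := by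
      apply tendsto_pow_atTop_nhds_zero_of_lt_one
      · positivity
      · rw [div_lt_one (by linarith)]; linarith
    simpa using this.const_mul C
  rw [tendsto_iff_dist_tendsto_zero]
  apply squeeze_zero (fun n => dist_nonneg)
  · intro n
    have hdn : |(d:ℝ)| ^ n ≠ 0 := by positivity
    have := hCb (F^[n] x)
    calc dist (F^[n] x / (d:ℝ)^n) (H x)
        = |F^[n] x - H (F^[n] x)| / |(d:ℝ)|^n := by
          rw [Real.dist_eq, key n x]
          rw [← abs_pow, ← abs_div]
          congr 1
          field_simp
      _ ≤ C / |(d:ℝ)|^n := by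
          apply div_le_div_of_nonneg_right _ (by positivity) |>.trans_eq rfl
          rw [abs_sub_comm]; exact this
      _ = C * (1 / |(d:ℝ)|)^n := by
          rw [div_pow, one_pow]; ring
  · exact hlim
end
end

section
/- Let f : S¹ → S¹ be a covering map of degree d with |d| > 1. Then every semiconjugacy h from f to m_d (i.e., continuous h with h∘f = m_d∘h and h inducing an isomorphism on the fundamental group) is monotone, i.e., has a monotone lift to ℝ. -/
noncomputable section

/-- `m_d : S¹ → S¹` (multiplicatively `z ↦ z^d`). -/
def md (d : ℤ) : S1 → S1 := fun z => d • z

/-- `h` is a semiconjugacy from `f` to `m_d`: it is continuous, satisfies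
`h ∘ f = m_d ∘ h`, and induces an isomorphism on `π₁(S¹) ≅ ℤ`
(i.e. it lifts to `H : ℝ → ℝ` with `H(x+1) = H(x) ± 1`). -/
def IsSemiconj (f h : S1 → S1) (d : ℤ) : Prop :=
  Continuous h ∧ (∀ z, h (f z) = md d (h z)) ∧
    ∃ e : ℤ, (e = 1 ∨ e = -1) ∧ ∃ H : ℝ → ℝ, Continuous H ∧
      (∀ x, proj (H x) = h (proj x)) ∧ ∀ x, H (x + 1) = H x + e

-- basic facts about proj
lemma proj_eq_iff {u v : ℝ} : proj u = proj v ↔ ∃ n : ℤ, u - v = n := by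
  simp only [proj]
  rw [show ((u : S1) = v) ↔ _ from QuotientAddGroup.eq_iff_sub_mem,
    AddSubgroup.mem_zmultiples_iff]
  constructor
  · rintro ⟨k, hk⟩; exact ⟨k, by simpa [zsmul_eq_mul] using hk.symm⟩
  · rintro ⟨n, hn⟩; exact ⟨n, by simpa [zsmul_eq_mul] using hn.symm⟩

lemma proj_inj {u v : ℝ} (h : proj u = proj v) (hd : |u - v| < 1) : u = v := by
  obtain ⟨n, hn⟩ := proj_eq_iff.mp h
  rw [hn] at hd
  have h2 : |n| < 1 := by exact_mod_cast (by simpa using hd : |(n:ℝ)| < (1:ℤ))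
  have h3 : n = 0 := by have := abs_lt.mp h2; omega
  rw [h3] at hn; push_cast at hn; linarith

lemma continuous_proj : Continuous proj := AddCircle.continuous_mk' 1

-- no interior local maximum for locally injective map
lemma no_loc_max {F : ℝ → ℝ} (hF : Continuous F) {c ε : ℝ} (hε : 0 < ε)
    (hinj : Set.InjOn F (Set.Ioo (c - ε) (c + ε)))
    (hmax : ∀ x ∈ Set.Ioo (c - ε) (c + ε), F x ≤ F c) : False := by
  have hcmem : c ∈ Set.Ioo (c - ε) (c + ε) := by constructor <;> linarith
  set u := c - ε / 2 with hu
  set v := c + ε / 2 with hv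
  have humem : u ∈ Set.Ioo (c - ε) (c + ε) := by constructor <;> simp [hu] <;> linarith
  have hvmem : v ∈ Set.Ioo (c - ε) (c + ε) := by constructor <;> simp [hv] <;> linarith
  have hFu : F u < F c := by
    rcases lt_or_eq_of_le (hmax u humem) with h | h
    · exact h
    · exact absurd (hinj humem hcmem h) (by simp [hu]; linarith)
  have hFv : F v < F c := by
    rcases lt_or_eq_of_le (hmax v hvmem) with h | h
    · exact h
    · exact absurd (hinj hvmem hcmem h) (by simp [hv]; linarith)
  rcases le_total (F u) (F v) with h1 | h1
  · have hsub := intermediate_value_Icc (show u ≤ c by simp [hu]; linarith) hF.continuousOn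
    obtain ⟨w, hw, hwv⟩ := hsub ⟨h1, hFv.le⟩
    have hwmem : w ∈ Set.Ioo (c - ε) (c + ε) := ⟨lt_of_lt_of_le humem.1 hw.1, lt_of_le_of_lt hw.2 hcmem.2⟩
    have : w = v := hinj hwmem hvmem hwv
    have : w < v := lt_of_le_of_lt hw.2 (by simp [hv]; linarith)
    simp_all
  · have hsub := intermediate_value_Icc' (show c ≤ v by simp [hv]; linarith) hF.continuousOn
    obtain ⟨w, hw, hwu⟩ := hsub ⟨h1, hFu.le⟩
    have hwmem : w ∈ Set.Ioo (c - ε) (c + ε) := ⟨lt_of_lt_of_le hcmem.1 hw.1, lt_of_le_of_lt hw.2 hvmem.2⟩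
    have : w = u := hinj hwmem humem hwu
    have : u < w := lt_of_lt_of_le (by simp [hu]; linarith) hw.1
    simp_all

-- injectivity from local injectivity
lemma inj_of_locInj {F : ℝ → ℝ} (hF : Continuous F)
    (hloc : ∀ x : ℝ, ∃ ε > 0, Set.InjOn F (Set.Ioo (x - ε) (x + ε))) :
    Function.Injective F := by
  -- helper: no a < b with F a = F b
  suffices key : ∀ a b : ℝ, a < b → F a = F b → False by
    intro a b hab
    rcases lt_trichotomy a b with h | h | h
    · exact absurd hab (by intro hh; exact key a b h hh)
    · exact h
    · exact absurd hab (by intro hh; exact key b a h hh.symm)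
  intro a b hab hFab
  -- interior extremum lemma
  have interior_max : ∀ c ∈ Set.Ioo a b, (∀ x ∈ Set.Icc a b, F x ≤ F c) → False := by
    intro c hc hmax
    obtain ⟨ε, hε, hinj⟩ := hloc c
    set ε' := min ε (min (c - a) (b - c)) with hε'
    have hε'pos : 0 < ε' := by
      simp only [hε', lt_min_iff]
      exact ⟨hε, by simp; constructor <;> linarith [hc.1, hc.2]⟩
    have hsub1 : Set.Ioo (c - ε') (c + ε') ⊆ Set.Ioo (c - ε) (c + ε) :=
      Set.Ioo_subset_Ioo (by have := min_le_left ε (min (c-a) (b-c)); linarith) (by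
        have := min_le_left ε (min (c-a) (b-c)); linarith)
    have hsub2 : Set.Ioo (c - ε') (c + ε') ⊆ Set.Icc a b := by
      intro x hx
      have h1 : ε' ≤ c - a := le_trans (min_le_right _ _) (min_le_left _ _)
      have h2 : ε' ≤ b - c := le_trans (min_le_right _ _) (min_le_right _ _)
      exact ⟨by linarith [hx.1], by linarith [hx.2]⟩
    exact no_loc_max hF hε'pos (hinj.mono hsub1) (fun x hx => hmax x (hsub2 hx))
  have interior_min : ∀ c ∈ Set.Ioo a b, (∀ x ∈ Set.Icc a b, F c ≤ F x) → False := by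
    intro c hc hmin
    obtain ⟨ε, hε, hinj⟩ := hloc c
    set ε' := min ε (min (c - a) (b - c)) with hε'
    have hε'pos : 0 < ε' := by
      simp only [hε', lt_min_iff]
      exact ⟨hε, by simp; constructor <;> linarith [hc.1, hc.2]⟩
    have hsub1 : Set.Ioo (c - ε') (c + ε') ⊆ Set.Ioo (c - ε) (c + ε) :=
      Set.Ioo_subset_Ioo (by have := min_le_left ε (min (c-a) (b-c)); linarith) (by
        have := min_le_left ε (min (c-a) (b-c)); linarith)
    have hsub2 : Set.Ioo (c - ε') (c + ε') ⊆ Set.Icc a b := by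
      intro x hx
      have h1 : ε' ≤ c - a := le_trans (min_le_right _ _) (min_le_left _ _)
      have h2 : ε' ≤ b - c := le_trans (min_le_right _ _) (min_le_right _ _)
      exact ⟨by linarith [hx.1], by linarith [hx.2]⟩
    have hinj' : Set.InjOn (fun x => -F x) (Set.Ioo (c - ε') (c + ε')) := by
      intro x hx y hy hxy
      exact (hinj.mono hsub1) hx hy (by simpa using congrArg Neg.neg hxy)
    exact no_loc_max hF.neg hε'pos hinj' (fun x hx => by
      simpa using hmin x (hsub2 hx))
  have hne : (Set.Icc a b).Nonempty := ⟨a, by constructor <;> linarith⟩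
  obtain ⟨c, hcmem, hcmax⟩ := isCompact_Icc.exists_isMaxOn hne hF.continuousOn
  obtain ⟨c', hc'mem, hc'min⟩ := isCompact_Icc.exists_isMinOn hne hF.continuousOn
  have hmaxall : ∀ x ∈ Set.Icc a b, F x ≤ F c := fun x hx => hcmax hx
  have hminall : ∀ x ∈ Set.Icc a b, F c' ≤ F x := fun x hx => hc'min hx
  by_cases hcint : c ∈ Set.Ioo a b
  · exact interior_max c hcint hmaxall
  · have hFc : F c = F a := by
      rcases hcmem.1.lt_or_eq with h | h
      · rcases hcmem.2.lt_or_eq with h2 | h2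
        · exact absurd ⟨h, h2⟩ hcint
        · rw [h2, ← hFab]
      · rw [← h]
    by_cases hc'int : c' ∈ Set.Ioo a b
    · exact interior_min c' hc'int hminall
    · have hFc' : F c' = F a := by
        rcases hc'mem.1.lt_or_eq with h | h
        · rcases hc'mem.2.lt_or_eq with h2 | h2
          · exact absurd ⟨h, h2⟩ hc'int
          · rw [h2, ← hFab]
        · rw [← h]
      -- F constant on [a,b]
      have hconst : ∀ x ∈ Set.Icc a b, F x = F a := fun x hx =>
        le_antisymm (hFc ▸ hmaxall x hx) (hFc' ▸ hminall x hx)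
      set m := (a + b) / 2 with hm
      obtain ⟨ε, hε, hinj⟩ := hloc m
      set r := min (ε / 2) ((b - a) / 4) with hr
      have hrpos : 0 < r := by
        simp only [hr, lt_min_iff]; constructor <;> linarith
      have hmmem : m ∈ Set.Ioo (m - ε) (m + ε) := by constructor <;> linarith
      have hpmem : m + r ∈ Set.Ioo (m - ε) (m + ε) := by
        have : r ≤ ε / 2 := min_le_left _ _
        constructor <;> linarith
      have h1 : m ∈ Set.Icc a b := ⟨by linarith, by linarith⟩
      have h2 : m + r ∈ Set.Icc a b := by
        have : r ≤ (b - a) / 4 := min_le_right _ _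
        exact ⟨by linarith, by linarith⟩
      have : m = m + r := hinj hmmem hpmem (by rw [hconst m h1, hconst (m + r) h2])
      linarith

-- continuous integer-valued functions are constant
lemma int_valued_const {t : ℝ → ℝ} (ht : Continuous t)
    (hint : ∀ x, ∃ n : ℤ, t x = n) : ∀ x y, t x = t y := by
  have key : ∀ x y : ℝ, x ≤ y → t x = t y := by
    intro x y hxy
    by_contra hne
    obtain ⟨n, hn⟩ := hint x
    obtain ⟨m, hm⟩ := hint y
    rcases lt_or_gt_of_ne hne with hlt | hgt
    · have hsub := intermediate_value_Icc hxy ht.continuousOn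
      have hmem : (n : ℝ) + 1/2 ∈ Set.Icc (t x) (t y) := by
        have : n < m := by rw [hn, hm] at hlt; exact_mod_cast hlt
        have : (n : ℝ) + 1 ≤ m := by exact_mod_cast this
        constructor <;> [rw [hn]; rw [hm]] <;> linarith
      obtain ⟨w, _, hw⟩ := hsub hmem
      obtain ⟨k, hk⟩ := hint w
      rw [hk] at hw
      have : (2 * k : ℝ) = 2 * n + 1 := by linarith
      have : (2 * k : ℤ) = 2 * n + 1 := by exact_mod_cast this
      omega
    · have hsub := intermediate_value_Icc' hxy ht.continuousOn
      have hmem : (m : ℝ) + 1/2 ∈ Set.Icc (t y) (t x) := by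
        have : m < n := by rw [hn, hm] at hgt; exact_mod_cast hgt
        have : (m : ℝ) + 1 ≤ n := by exact_mod_cast this
        constructor <;> [rw [hm]; rw [hn]] <;> linarith
      obtain ⟨w, _, hw⟩ := hsub hmem
      obtain ⟨k, hk⟩ := hint w
      rw [hk] at hw
      have : (2 * k : ℝ) = 2 * m + 1 := by linarith
      have : (2 * k : ℤ) = 2 * m + 1 := by exact_mod_cast this
      omega
  intro x y
  rcases le_total x y with h | h
  · exact key x y h
  · exact (key y x h).symm

-- continuous periodic functions are bounded
lemma bounded_of_periodic {B : ℝ → ℝ} (hB : Continuous B)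
    (hper : ∀ x, B (x + 1) = B x) : ∃ M : ℝ, ∀ x, |B x| ≤ M := by
  obtain ⟨M, hM⟩ := (isCompact_Icc (a := (0:ℝ)) (b := 1)).exists_bound_of_continuousOn
    hB.continuousOn
  refine ⟨M, fun x => ?_⟩
  have hper' : Function.Periodic B 1 := hper
  have hfr : B x = B (Int.fract x) := by
    have h1 : B (x - (⌊x⌋ : ℝ) * 1) = B x := hper'.sub_int_mul_eq (x := x) ⌊x⌋
    rw [← Int.self_sub_floor]
    simpa using h1.symm
  rw [hfr]
  have hmem : Int.fract x ∈ Set.Icc (0:ℝ) 1 :=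
    ⟨Int.fract_nonneg x, (Int.fract_lt_one x).le⟩
  simpa using hM _ hmem

/-- every semiconjugacy from a covering map of degree `d`, `|d|>1`,
to `m_d` is monotone, i.e. it admits a monotone lift to `ℝ`. -/
theorem semiconj_of_covering_is_monotone
    (d : ℤ) (hd : 1 < |d|)
    (f : S1 → S1) (hcov : IsCoveringMap f)
    (F : ℝ → ℝ) (hF : Continuous F)
    (hlift : ∀ x : ℝ, proj (F x) = f (proj x))
    (hdeg : ∀ x : ℝ, F (x + 1) = F x + d)
    (h : S1 → S1) (hh : IsSemiconj f h d) :
    ∃ H : ℝ → ℝ, Continuous H ∧ (∀ x, proj (H x) = h (proj x)) ∧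
      (Monotone H ∨ Antitone H) := by
  obtain ⟨hhc, hsemi, e, he, H, hHc, hHlift, hHper⟩ := hh
  refine ⟨H, hHc, hHlift, ?_⟩
  -- the lifted semiconjugacy equation
  have hsc : ∀ x : ℝ, ∃ n : ℤ, H (F x) - (d : ℝ) * H x = n := by
    intro x
    have h1 : proj (H (F x)) = h (f (proj x)) := by rw [hHlift, hlift]
    have h2 : h (f (proj x)) = d • h (proj x) := hsemi _
    have h3 : d • h (proj x) = proj ((d : ℝ) * H x) := by
      rw [← hHlift]
      show d • ((H x : ℝ) : S1) = _
      rw [← AddCircle.coe_zsmul]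
      simp [proj, zsmul_eq_mul]
    exact proj_eq_iff.mp (h1.trans (h2.trans h3))
  have htc : Continuous (fun x => H (F x) - (d : ℝ) * H x) :=
    (hHc.comp hF).sub (continuous_const.mul hHc)
  set c : ℝ := H (F 0) - (d : ℝ) * H 0 with hc
  have hconj : ∀ x, H (F x) = (d : ℝ) * H x + c := by
    intro x
    have := int_valued_const htc hsc x 0
    linarith [this]
  -- F is injective
  have hlocinj : ∀ x : ℝ, ∃ ε > 0, Set.InjOn F (Set.Ioo (x - ε) (x + ε)) := by
    intro x
    obtain ⟨U, hUopen, hxU, hUinj⟩ := hcov.isLocalHomeomorph.isLocallyInjective (proj x)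
    have hVopen : IsOpen (proj ⁻¹' U) := hUopen.preimage continuous_proj
    obtain ⟨ε1, hε1, hball⟩ := Metric.isOpen_iff.mp hVopen x hxU
    refine ⟨min ε1 (1/2), by positivity, ?_⟩
    intro u hu v hv huv
    have hεle1 : min ε1 (1/2) ≤ ε1 := min_le_left _ _
    have hεle2 : min ε1 (1/2) ≤ 1/2 := min_le_right _ _
    have hub : proj u ∈ U := hball (by
      rw [Metric.mem_ball, Real.dist_eq, abs_lt]
      exact ⟨by linarith [hu.1], by linarith [hu.2]⟩)
    have hvb : proj v ∈ U := hball (by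
      rw [Metric.mem_ball, Real.dist_eq, abs_lt]
      exact ⟨by linarith [hv.1], by linarith [hv.2]⟩)
    have hfeq : f (proj u) = f (proj v) := by
      rw [← hlift, ← hlift, huv]
    have : proj u = proj v := hUinj hub hvb hfeq
    exact proj_inj this (by
      rw [abs_lt]
      constructor <;> linarith [hu.1, hu.2, hv.1, hv.2])
  have hFinj : Function.Injective F := inj_of_locInj hF hlocinj
  have hF2mono : Monotone (fun x => F (F x)) := by
    rcases Continuous.strictMono_of_inj hF hFinj with hm | ha
    · exact (hm.comp hm).monotone
    · intro a b hab
      rcases eq_or_lt_of_le hab with rfl | hlt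
      · exact le_refl _
      · exact (ha (ha hlt)).le
  -- the normalized lift G
  set G : ℝ → ℝ := fun x => (e : ℝ) * H x with hG
  have hGc : Continuous G := continuous_const.mul hHc
  have he2 : (e : ℝ) * e = 1 := by rcases he with rfl | rfl <;> norm_num
  have hGper : ∀ x, G (x + 1) = G x + 1 := by
    intro x
    simp only [hG, hHper x, mul_add, he2]
  have hGconj : ∀ x, G (F x) = (d : ℝ) * G x + (e : ℝ) * c := by
    intro x
    simp only [hG, hconj x]; ring
  have hG2 : ∀ x, G (F (F x)) = (d : ℝ) ^ 2 * G x + ((d : ℝ) * ((e : ℝ) * c) + (e : ℝ) * c) := by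
    intro x
    rw [hGconj, hGconj]; ring
  -- boundedness of G - id
  obtain ⟨M, hM⟩ := bounded_of_periodic (B := fun x => G x - x)
    (hGc.sub continuous_id) (fun x => by simp only [hGper x]; ring)
  -- d^2 is at least 4
  have hd2 : (2 : ℤ) ≤ |d| := hd
  have hD4 : (4 : ℝ) ≤ (d : ℝ) ^ 2 := by
    have h2 : (2 : ℝ) ≤ |(d : ℝ)| := by
      rw [← Int.cast_abs]; exact_mod_cast hd2
    nlinarith [sq_abs (d : ℝ)]
  -- G is monotone
  have hGmono : Monotone G := by
    by_contra hnm
    rw [Monotone] at hnm; push_neg at hnm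
    obtain ⟨a, b, hab, hlt⟩ := hnm
    set δ := G a - G b with hδdef
    have hδ : 0 < δ := by simp [hδdef]; linarith
    set F2 : ℝ → ℝ := fun x => F (F x) with hF2
    have hseq : ∀ n : ℕ, G (F2^[n] a) - G (F2^[n] b) = ((d : ℝ) ^ 2) ^ n * δ := by
      intro n
      induction n with
      | zero => simp [hδdef]
      | succ n ih =>
        rw [Function.iterate_succ_apply', Function.iterate_succ_apply']
        rw [show F2 (F2^[n] a) = F (F (F2^[n] a)) from rfl,
          show F2 (F2^[n] b) = F (F (F2^[n] b)) from rfl, hG2, hG2]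
        linear_combination (d : ℝ) ^ 2 * ih
    have hbound : ∀ n : ℕ, ((d : ℝ) ^ 2) ^ n * δ ≤ 2 * M := by
      intro n
      have hord : F2^[n] a ≤ F2^[n] b := (hF2mono.iterate n) hab
      have h1 := hM (F2^[n] a)
      have h2 := hM (F2^[n] b)
      rw [abs_le] at h1 h2
      have := hseq n
      linarith [this, h1.1, h1.2, h2.1, h2.2, hord]
    obtain ⟨n, hn⟩ := pow_unbounded_of_one_lt (2 * M / δ) (show (1:ℝ) < (d:ℝ)^2 by linarith)
    have : 2 * M < ((d : ℝ) ^ 2) ^ n * δ := by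
      rw [div_lt_iff₀ hδ] at hn; linarith
    linarith [hbound n]
  rcases he with rfl | rfl
  · left
    intro a b hab
    have h1 : ((1 : ℤ) : ℝ) * H a ≤ ((1 : ℤ) : ℝ) * H b := hGmono hab
    push_cast at h1
    linarith
  · right
    intro a b hab
    have h1 : ((-1 : ℤ) : ℝ) * H a ≤ ((-1 : ℤ) : ℝ) * H b := hGmono hab
    push_cast at h1
    linarith
end
end

section
/- Let f : S¹ → S¹ be a continuous map of degree d, |d| > 1. If h₁ and h₂ are both semiconjugacies from f to m_d, then there exists a unique homeomorphism c of S¹ commuting with m_d such that h₁ = c ∘ h₂. -/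
noncomputable section

/-- A continuous integer-valued function on `ℝ` is constant. -/
lemma aux_int_const (g : ℝ → ℝ) (hg : Continuous g) (hz : ∀ x, ∃ n : ℤ, g x = n) :
    ∃ m : ℤ, ∀ x, g x = m := by
  have hfl : ∀ x, (⌊g x⌋ : ℝ) = g x := by
    intro x; obtain ⟨n, hn⟩ := hz x; rw [hn]; simp
  have hcont : Continuous fun x => (⌊g x⌋ : ℤ) := by
    rw [(Int.isClosedEmbedding_coe_real).toIsEmbedding.continuous_iff]
    show Continuous fun x => ((⌊g x⌋ : ℤ) : ℝ)
    simpa [hfl] using hg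
  have hconst : ∀ x, ⌊g x⌋ = ⌊g 0⌋ := fun x =>
    ((IsLocallyConstant.iff_continuous _).2 hcont).apply_eq_of_isPreconnected
      isPreconnected_univ (Set.mem_univ x) (Set.mem_univ 0)
  exact ⟨⌊g 0⌋, fun x => by rw [← hfl x, hconst x]⟩

lemma aux_coe_int_zero (n : ℤ) : ((n : ℝ) : S1) = 0 :=
  (AddCircle.coe_eq_zero_iff (1 : ℝ)).2 ⟨n, by simp⟩

/-- A periodic continuous function satisfying `ψ ∘ F = d ψ` with `|d| > 1` vanishes. -/
lemma aux_psi_zero (d : ℤ) (hd : 1 < |d|) (F ψ : ℝ → ℝ) (hψ : Continuous ψ)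
    (hper : ∀ x, ψ (x + 1) = ψ x) (heq : ∀ x, ψ (F x) = d * ψ x) : ∀ x, ψ x = 0 := by
  have hPer : Function.Periodic ψ 1 := hper
  obtain ⟨C, hC⟩ := (isCompact_Icc (a := (0:ℝ)) (b := 1)).exists_bound_of_continuousOn
    hψ.continuousOn
  have hbd : ∀ y, |ψ y| ≤ C := by
    intro y
    have h1 : ψ (Int.fract y) = ψ y := by
      have h := hPer.sub_int_mul_eq (⌊y⌋) (x := y)
      rw [Int.fract]
      simpa using h
    have h2 : Int.fract y ∈ Set.Icc (0:ℝ) 1 :=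
      ⟨Int.fract_nonneg y, le_of_lt (Int.fract_lt_one y)⟩
    calc |ψ y| = ‖ψ (Int.fract y)‖ := by rw [h1]; rfl
    _ ≤ C := hC _ h2
  have hiter : ∀ (n : ℕ) (x), ψ (F^[n] x) = (d : ℝ) ^ n * ψ x := by
    intro n
    induction n with
    | zero => simp
    | succ n ih =>
      intro x
      rw [Function.iterate_succ_apply, ih (F x), heq x]
      ring
  intro x
  by_contra h0
  have hx : 0 < |ψ x| := abs_pos.2 h0
  have hdr : (1:ℝ) < |(d:ℝ)| := by exact_mod_cast hd
  obtain ⟨n, hn⟩ := pow_unbounded_of_one_lt (C / |ψ x|) hdr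
  have : C < |(d:ℝ)| ^ n * |ψ x| := by
    rw [← div_lt_iff₀ hx] at *
    exact hn
  have h2 : |(d:ℝ)| ^ n * |ψ x| ≤ C := by
    have := hbd (F^[n] x)
    rw [hiter n x] at this
    calc |(d:ℝ)| ^ n * |ψ x| = |(d:ℝ) ^ n * ψ x| := by rw [abs_mul, abs_pow]
    _ ≤ C := this
  linarith

/-- A degree-`±1` lift is "surjective mod 1". -/
lemma aux_lift_surj (H : ℝ → ℝ) (hH : Continuous H) (e : ℤ) (he : e = 1 ∨ e = -1)
    (hp : ∀ x, H (x + 1) = H x + e) : ∀ y : ℝ, ∃ x : ℝ, ∃ n : ℤ, H x = y + n := by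
  intro y
  have h1 : H 1 = H 0 + e := by simpa using hp 0
  rcases he with rfl | rfl <;> push_cast at h1
  · set n : ℤ := ⌈H 0 - y⌉ with hn
    have hb1 : H 0 ≤ y + n := by have := Int.le_ceil (H 0 - y); linarith
    have hb2 : y + n ≤ H 1 := by
      have h4 : (n : ℝ) ≤ (⌊H 0 - y⌋ : ℝ) + 1 := by
        exact_mod_cast Int.ceil_le_floor_add_one (H 0 - y)
      have h5 := Int.floor_le (H 0 - y)
      rw [h1]; linarith
    obtain ⟨x, -, hx⟩ := intermediate_value_Icc zero_le_one hH.continuousOn ⟨hb1, hb2⟩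
    exact ⟨x, n, hx⟩
  · set n : ℤ := ⌊H 0 - y⌋ with hn
    have hb2 : y + n ≤ H 0 := by have := Int.floor_le (H 0 - y); linarith
    have hb1 : H 1 ≤ y + n := by
      have h4 := Int.lt_floor_add_one (H 0 - y)
      rw [h1]; push_cast; linarith
    obtain ⟨x, -, hx⟩ := intermediate_value_Icc' zero_le_one hH.continuousOn ⟨hb1, hb2⟩
    exact ⟨x, n, hx⟩

set_option maxHeartbeats 1000000 in
/-- two semiconjugacies from `f` to `m_d` differ by a unique
self-conjugacy of `m_d`. -/
theorem semiconjugacies_differ_by_self_conjugacy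
    (d : ℤ) (hd : 1 < |d|)
    (f : S1 → S1) (hf : Continuous f)
    (F : ℝ → ℝ) (hF : Continuous F)
    (hlift : ∀ x : ℝ, proj (F x) = f (proj x))
    (hdeg : ∀ x : ℝ, F (x + 1) = F x + d)
    (h₁ h₂ : S1 → S1) (hh₁ : IsSemiconj f h₁ d) (hh₂ : IsSemiconj f h₂ d) :
    ∃! c : S1 → S1, IsHomeomorph c ∧ (∀ z, c (md d z) = md d (c z)) ∧
      ∀ z, h₁ z = c (h₂ z) := by
  obtain ⟨hc₁, hs₁, e₁, he₁, H₁, H₁c, H₁l, H₁p⟩ := hh₁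
  obtain ⟨hc₂, hs₂, e₂, he₂, H₂, H₂c, H₂l, H₂p⟩ := hh₂
  have hdne : d ≠ 1 := fun h => by simp [h] at hd
  have hd1 : (d : ℝ) - 1 ≠ 0 := sub_ne_zero.2 (by exact_mod_cast hdne)
  -- Step 1: each lift satisfies H (F x) = d * H x + m for a constant integer m
  have key : ∀ (h : S1 → S1) (H : ℝ → ℝ), Continuous H →
      (∀ x, proj (H x) = h (proj x)) → (∀ z, h (f z) = md d (h z)) →
      ∃ m : ℤ, ∀ x, H (F x) = d * H x + m := by
    intro h H Hc Hl hs
    have hz : ∀ x, ∃ n : ℤ, H (F x) - (d : ℝ) * H x = n := by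
      intro x
      have h1 : ((H (F x) : ℝ) : S1) = (((d : ℝ) * H x : ℝ) : S1) := by
        show proj (H (F x)) = proj ((d : ℝ) * H x)
        rw [Hl, hlift, hs, ← Hl]
        show md d ((H x : ℝ) : S1) = (((d : ℝ) * H x : ℝ) : S1)
        rw [show (d : ℝ) * H x = d • H x from (zsmul_eq_mul _ _).symm]
        rfl
      have h0 : ((H (F x) - (d : ℝ) * H x : ℝ) : S1) = 0 := by
        have : ((H (F x) - (d : ℝ) * H x : ℝ) : S1)
            = ((H (F x) : ℝ) : S1) - (((d : ℝ) * H x : ℝ) : S1) := rfl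
        rw [this, h1, sub_self]
      obtain ⟨n, hn⟩ := (AddCircle.coe_eq_zero_iff (1 : ℝ)).1 h0
      exact ⟨n, by simpa using hn.symm⟩
    obtain ⟨m, hm⟩ := aux_int_const (fun x => H (F x) - d * H x)
      ((Hc.comp hF).sub (continuous_const.mul Hc)) hz
    exact ⟨m, fun x => by have := hm x; linarith⟩
  obtain ⟨m₁, hm₁⟩ := key h₁ H₁ H₁c H₁l hs₁
  obtain ⟨m₂, hm₂⟩ := key h₂ H₂ H₂c H₂l hs₂
  -- Step 2: normalized lifts K i; their difference vanishes
  have he₁sq : (e₁ : ℝ) * e₁ = 1 := by rcases he₁ with rfl | rfl <;> norm_num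
  have he₂sq : (e₂ : ℝ) * e₂ = 1 := by rcases he₂ with rfl | rfl <;> norm_num
  set t₁ : ℝ := (e₁ : ℝ) * m₁ / ((d : ℝ) - 1) with ht₁
  set t₂ : ℝ := (e₂ : ℝ) * m₂ / ((d : ℝ) - 1) with ht₂
  set K₁ : ℝ → ℝ := fun x => (e₁ : ℝ) * H₁ x + t₁ with hK₁
  set K₂ : ℝ → ℝ := fun x => (e₂ : ℝ) * H₂ x + t₂ with hK₂
  have hψ0 : ∀ x, K₁ x - K₂ x = 0 := by
    have hcont : Continuous fun x => K₁ x - K₂ x :=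
      ((continuous_const.mul H₁c).add continuous_const).sub
        ((continuous_const.mul H₂c).add continuous_const)
    have hpp : ∀ x, K₁ (x + 1) - K₂ (x + 1) = K₁ x - K₂ x := by
      intro x
      simp only [hK₁, hK₂, H₁p, H₂p]
      linear_combination he₁sq - he₂sq
    have heqq : ∀ x, K₁ (F x) - K₂ (F x) = (d : ℝ) * (K₁ x - K₂ x) := by
      intro x
      simp only [hK₁, hK₂, hm₁, hm₂, ht₁, ht₂]
      field_simp
      ring
    exact aux_psi_zero d hd F _ hcont hpp heqq
  set ε : ℤ := e₁ * e₂ with hε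
  have hεor : ε = 1 ∨ ε = -1 := by
    rcases he₁ with rfl | rfl <;> rcases he₂ with rfl | rfl <;> simp [hε]
  set τ : ℝ := ((ε * m₂ - m₁ : ℤ) : ℝ) / ((d : ℝ) - 1) with hτ
  have hHrel : ∀ x, H₁ x = (ε : ℝ) * H₂ x + τ := by
    intro x
    have h2 : (e₁ : ℝ) * H₁ x + t₁ = (e₂ : ℝ) * H₂ x + t₂ := by
      have h := hψ0 x
      simp only [hK₁, hK₂] at h
      linarith
    rw [ht₁, ht₂] at h2
    rw [hτ, hε]
    push_cast
    linear_combination (e₁ : ℝ) * h2 - (H₁ x + (m₁ : ℝ) / ((d : ℝ) - 1)) * he₁sq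
  have hτd : ((d : ℝ) - 1) * τ = ((ε * m₂ - m₁ : ℤ) : ℝ) := by
    rw [hτ]; field_simp
  -- the candidate map
  set c : S1 → S1 := fun z => ε • z + ((τ : ℝ) : S1) with hc
  -- d • τ = τ in S1
  have hτfix : (d : ℤ) • ((τ : ℝ) : S1) = ((τ : ℝ) : S1) := by
    have h1 : (d : ℤ) • ((τ : ℝ) : S1) = (((d : ℝ) * τ : ℝ) : S1) := by
      rw [show (d : ℝ) * τ = (d : ℤ) • τ from (zsmul_eq_mul _ _).symm]; rfl
    have h2 : (d : ℝ) * τ = (((d : ℝ) - 1) * τ) + τ := by ring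
    rw [h1, h2, hτd]
    show ((((ε * m₂ - m₁ : ℤ) : ℝ) : S1) + ((τ : ℝ) : S1) = _)
    rw [aux_coe_int_zero, zero_add]
  have hcomm : ∀ z, c (md d z) = md d (c z) := by
    intro z
    show ε • ((d : ℤ) • z) + ((τ : ℝ) : S1) = (d : ℤ) • (ε • z + ((τ : ℝ) : S1))
    rw [smul_add, smul_comm, hτfix]
  have hfact : ∀ z, h₁ z = c (h₂ z) := by
    intro z
    obtain ⟨x, rfl⟩ := Quotient.exists_rep z
    have hx : (Quotient.mk _ x : S1) = proj x := rfl
    rw [hx, ← H₁l]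
    show ((H₁ x : ℝ) : S1) = c (h₂ (proj x))
    rw [← H₂l, hHrel x]
    show (((ε : ℝ) * H₂ x + τ : ℝ) : S1) = ε • ((H₂ x : ℝ) : S1) + ((τ : ℝ) : S1)
    rw [show (ε : ℝ) * H₂ x = ε • H₂ x from (zsmul_eq_mul _ _).symm]
    rfl
  have hhom : IsHomeomorph c := by
    rcases hεor with h | h
    · have : c = fun z => z + ((τ : ℝ) : S1) := by
        funext z; simp [hc, h]
      rw [this]
      exact (Homeomorph.addRight ((τ : ℝ) : S1)).isHomeomorph
    · have : c = fun z => -z + ((τ : ℝ) : S1) := by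
        funext z; simp [hc, h]
      rw [this]
      exact ((Homeomorph.neg S1).trans
        (Homeomorph.addRight ((τ : ℝ) : S1))).isHomeomorph
  -- h₂ is surjective
  have hsurj : ∀ z : S1, ∃ w : S1, h₂ w = z := by
    intro z
    obtain ⟨y, rfl⟩ := Quotient.exists_rep z
    have hy : (Quotient.mk _ y : S1) = proj y := rfl
    obtain ⟨x, n, hxn⟩ := aux_lift_surj H₂ H₂c e₂ he₂ H₂p y
    refine ⟨proj x, ?_⟩
    rw [← H₂l, hy, hxn]
    show ((y + (n : ℝ) : ℝ) : S1) = ((y : ℝ) : S1)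
    have : ((y + (n : ℝ) : ℝ) : S1) = ((y : ℝ) : S1) + (((n : ℝ) : ℝ) : S1) := rfl
    rw [this, aux_coe_int_zero, add_zero]
  refine ⟨c, ⟨hhom, hcomm, hfact⟩, ?_⟩
  intro c' ⟨_, _, hfact'⟩
  funext z
  obtain ⟨w, rfl⟩ := hsurj z
  rw [← hfact' w, hfact w]
end
end

section
/- Every semiconjugacy from m_d to itself (|d| > 1) is a homeomorphism, and the group of homeomorphisms of S¹ commuting with m_d is generated by the rotations by the (|d−1|)-th roots of unity together with complex conjugation; it is isomorphic to the dihedral group D_{d−1}. -/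
noncomputable section

/-- The rotation of `S¹` by the `(|d-1|)`-th root of unity `exp(2πij/(d-1))`,
written additively as translation by `j/(d-1)`. -/
def rot (d j : ℤ) : S1 → S1 := fun z => z + (((j : ℝ) / ((d : ℝ) - 1) : ℝ) : S1)

open Set

namespace SelfSemi

lemma continuous_proj : Continuous proj := AddCircle.continuous_mk' 1

lemma proj_surj : Function.Surjective proj := fun z => Quot.exists_rep z

lemma proj_add (x y : ℝ) : proj (x + y) = proj x + proj y := rfl

lemma proj_zsmul (e : ℤ) (x : ℝ) : e • proj x = proj (e * x) := by
  rw [proj, ← AddCircle.coe_zsmul, zsmul_eq_mul]; rfl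

lemma proj_int (m : ℤ) : proj (m : ℝ) = 0 := by
  rw [proj, AddCircle.coe_eq_zero_iff]
  exact ⟨m, by simp⟩

lemma proj_eq_zero_iff {x : ℝ} : proj x = 0 ↔ ∃ m : ℤ, x = (m : ℝ) := by
  rw [proj, AddCircle.coe_eq_zero_iff]
  constructor
  · rintro ⟨m, hm⟩; exact ⟨m, by simpa using hm.symm⟩
  · rintro ⟨m, hm⟩; exact ⟨m, by simp [hm]⟩

lemma proj_eq_proj {x y : ℝ} : proj x = proj y ↔ ∃ m : ℤ, x = y + (m : ℝ) := by
  constructor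
  · intro h
    have : proj (x - y) = 0 := by
      have hs : proj (x - y) = proj x - proj y := rfl
      rw [hs, h, sub_self]
    obtain ⟨m, hm⟩ := proj_eq_zero_iff.mp this
    exact ⟨m, by linarith⟩
  · rintro ⟨m, rfl⟩
    rw [proj_add, proj_int, add_zero]

/-- A continuous integer-valued function on `ℝ` is constant. -/
lemma int_valued_const {f : ℝ → ℝ} (hf : Continuous f) (h : ∀ x, ∃ m : ℤ, f x = m)
    (x : ℝ) : f x = f 0 := by
  have hopen : {y : ℝ | f y = f 0} = f ⁻¹' (Ioo (f 0 - 1) (f 0 + 1)) := by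
    ext y
    simp only [mem_setOf_eq, mem_preimage, mem_Ioo]
    constructor
    · intro h'; rw [h']; constructor <;> linarith
    · rintro ⟨h1, h2⟩
      obtain ⟨m, hm⟩ := h y
      obtain ⟨m0, hm0⟩ := h 0
      rw [hm, hm0] at h1 h2 ⊢
      have : m = m0 := by
        have l1 : (m : ℝ) < m0 + 1 := by linarith
        have l2 : (m0 : ℝ) < m + 1 := by linarith
        have l1' : m < m0 + 1 := by exact_mod_cast l1
        have l2' : m0 < m + 1 := by exact_mod_cast l2
        omega
      rw [this]
  have hclopen : IsClopen {y : ℝ | f y = f 0} := by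
    constructor
    · exact isClosed_eq hf continuous_const
    · rw [hopen]; exact isOpen_Ioo.preimage hf
  have := (isClopen_iff.mp hclopen).resolve_left (by
    intro he
    have : (0:ℝ) ∈ {y : ℝ | f y = f 0} := rfl
    rw [he] at this; exact this)
  have hx : x ∈ {y : ℝ | f y = f 0} := by rw [this]; trivial
  exact hx

/-- Key rigidity lemma: a continuous `H : ℝ → ℝ` with `H(x+1) = H(x) + e` and
`H(dx) ≡ d·H(x) (mod ℤ)` is affine. -/
lemma lift_affine {d : ℤ} (hd : 1 < |d|) {H : ℝ → ℝ} (hH : Continuous H)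
    {e : ℤ} (he : ∀ x, H (x + 1) = H x + e)
    (hsc : ∀ x, ∃ m : ℤ, H ((d : ℝ) * x) = (d : ℝ) * H x + m) :
    ∃ k : ℤ, ∀ x, H x = (e : ℝ) * x + (k : ℝ) / ((d : ℝ) - 1) := by
  have hdne : (d : ℝ) - 1 ≠ 0 := by
    have : d ≠ 1 := by intro h; rw [h] at hd; norm_num at hd
    intro h
    exact this (by exact_mod_cast sub_eq_zero.mp h)
  have hdabs : (1 : ℝ) < |(d : ℝ)| := by exact_mod_cast hd
  -- the defect is a constant integer m
  set f : ℝ → ℝ := fun x => H ((d : ℝ) * x) - (d : ℝ) * H x with hfdef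
  have hfc : Continuous f := (hH.comp (continuous_const.mul continuous_id)).sub
    (continuous_const.mul hH)
  have hfi : ∀ x, ∃ m : ℤ, f x = m := by
    intro x; obtain ⟨m, hm⟩ := hsc x; exact ⟨m, by simp [hfdef, hm]⟩
  obtain ⟨m, hm⟩ := hfi 0
  have hf : ∀ x, f x = m := fun x => (int_valued_const hfc hfi x).trans hm
  have hHd : ∀ x, H ((d : ℝ) * x) = (d : ℝ) * H x + m := by
    intro x; have := hf x; simp only [hfdef] at this; linarith
  -- the periodic part
  set F : ℝ → ℝ := fun x => H x + (m : ℝ) / ((d : ℝ) - 1) - (e : ℝ) * x with hFdef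
  have hFc : Continuous F := by fun_prop
  have hFper : ∀ x, F (x + 1) = F x := by
    intro x; simp only [hFdef, he x]; ring
  have hFd : ∀ x, F ((d : ℝ) * x) = (d : ℝ) * F x := by
    intro x
    simp only [hFdef, hHd x]
    field_simp
    ring
  have hFint : ∀ (n : ℤ) (x : ℝ), F (x + n) = F x := by
    intro n
    induction n using Int.induction_on with
    | zero => simp
    | succ i ih =>
      intro x
      push_cast at ih ⊢
      rw [show x + ((i:ℝ) + 1) = (x + i) + 1 by ring, hFper, ih]
    | pred i ih =>
      intro x
      push_cast at ih ⊢
      have h1 := hFper (x + (-(i:ℝ) - 1))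
      rw [show x + (-(i:ℝ) - 1) + 1 = x + -(i:ℝ) by ring, ih] at h1
      exact h1.symm
  -- boundedness
  obtain ⟨M, hM⟩ := (isCompact_Icc (a := (0:ℝ)) (b := 1)).exists_bound_of_continuousOn
    hFc.continuousOn
  have hMb : ∀ x, |F x| ≤ M := by
    intro x
    have h1 : F x = F (Int.fract x) := by
      rw [Int.fract]
      have := hFint (-⌊x⌋) x
      rw [show x + (-⌊x⌋ : ℤ) = x - ⌊x⌋ by push_cast; ring] at this
      exact this.symm
    rw [h1]
    have : Int.fract x ∈ Icc (0:ℝ) 1 :=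
      ⟨Int.fract_nonneg x, (Int.fract_lt_one x).le⟩
    simpa using hM _ this
  -- iteration
  have hiter : ∀ (n : ℕ) (x : ℝ), F ((d : ℝ) ^ n * x) = (d : ℝ) ^ n * F x := by
    intro n
    induction n with
    | zero => simp
    | succ i ih =>
      intro x
      rw [pow_succ, show (d:ℝ) ^ i * (d:ℝ) * x = (d:ℝ) * ((d:ℝ)^i * x) by ring, hFd, ih]
      ring
  have hF0 : ∀ x, F x = 0 := by
    intro x
    by_contra h0
    have hpos : 0 < |F x| := abs_pos.mpr h0
    obtain ⟨n, hn⟩ := pow_unbounded_of_one_lt (M / |F x|) hdabs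
    have hle : |(d:ℝ)| ^ n * |F x| ≤ M := by
      have := hMb ((d : ℝ) ^ n * x)
      rw [hiter n x, abs_mul, abs_pow] at this
      exact this
    rw [div_lt_iff₀ hpos] at hn
    linarith
  refine ⟨-m, fun x => ?_⟩
  have := hF0 x
  simp only [hFdef] at this
  push_cast
  have : H x = (e:ℝ) * x - (m:ℝ)/((d:ℝ)-1) := by linarith
  rw [this]; ring

end SelfSemi

namespace SelfSemi

/-- Fundamental-domain representative in `[-1/2, 1/2)`. -/
def dl : S1 → ℝ := fun z => ((AddCircle.equivIco 1 (-2⁻¹) z : Set.Ico _ _) : ℝ)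

lemma dl_proj (z : S1) : proj (dl z) = z := (AddCircle.equivIco 1 (-2⁻¹)).symm_apply_apply z

lemma dl_mem (z : S1) : dl z ∈ Set.Ico (-2⁻¹ : ℝ) (-2⁻¹ + 1) := (AddCircle.equivIco 1 (-2⁻¹) z).2

lemma dl_cont {z : S1} (hz : z ≠ (((-2⁻¹ : ℝ)) : S1)) : ContinuousAt dl z :=
  continuousAt_subtype_val.comp (AddCircle.continuousAt_equivIco 1 (-2⁻¹) hz)

lemma int_eq_zero_of_abs_lt {m : ℤ} (h1 : (-1:ℝ) < m) (h2 : (m:ℝ) < 1) : m = 0 := by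
  have a1 : (-1:ℤ) < m := by exact_mod_cast h1
  have a2 : m < 1 := by exact_mod_cast h2
  omega

lemma dl_zero : dl 0 = 0 := by
  obtain ⟨m, hm⟩ := proj_eq_zero_iff.mp (dl_proj 0)
  have h2 := dl_mem 0
  rw [hm] at h2 ⊢
  rcases h2 with ⟨ha, hb⟩
  have : m = 0 := int_eq_zero_of_abs_lt (by linarith) (by linarith)
  simp [this]

lemma half_ne_zero : ((((-2⁻¹ : ℝ)) : S1)) ≠ 0 := by
  intro h
  obtain ⟨m, hm⟩ := proj_eq_zero_iff.mp h
  have : m = 0 := int_eq_zero_of_abs_lt (by linarith) (by linarith)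
  rw [this] at hm
  norm_num at hm

/-- Uniform gap: increments over small steps avoid the antipode `-1/2`. -/
lemma exists_gap {γ : ℝ → S1} (hγ : Continuous γ) (hper : ∀ (x : ℝ) (m : ℤ), γ (x + m) = γ x) :
    ∃ N : ℕ, 0 < N ∧ ∀ x y : ℝ, |x - y| ≤ 1 / N → γ x - γ y ≠ (((-2⁻¹ : ℝ)) : S1) := by
  set pt : S1 := (((-2⁻¹ : ℝ)) : S1) with hpt
  set K : Set (ℝ × ℝ) := (Icc (-1:ℝ) 2) ×ˢ (Icc (-1:ℝ) 2) with hK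
  set V : Set (ℝ × ℝ) := K ∩ {p : ℝ × ℝ | γ p.1 - γ p.2 = pt} with hV
  have hKc : IsCompact K := (isCompact_Icc).prod (isCompact_Icc)
  have hVclosed : IsClosed {p : ℝ × ℝ | γ p.1 - γ p.2 = pt} :=
    isClosed_eq (((hγ.comp continuous_fst).sub (hγ.comp continuous_snd))) continuous_const
  have hVc : IsCompact V := hKc.inter_right hVclosed
  have key : ∃ ε > (0:ℝ), ∀ x y : ℝ, x ∈ Icc (-1:ℝ) 2 → y ∈ Icc (-1:ℝ) 2 →
      |x - y| < ε → γ x - γ y ≠ pt := by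
    rcases eq_empty_or_nonempty V with hemp | hne
    · refine ⟨1, one_pos, fun x y hx hy _ hc => ?_⟩
      have : (x, y) ∈ V := ⟨⟨hx, hy⟩, hc⟩
      rw [hemp] at this; exact this
    · obtain ⟨p0, hp0V, hp0min⟩ := hVc.exists_isMinOn hne
        ((continuous_fst.sub continuous_snd).abs.continuousOn)
      have hp0pos : 0 < |p0.1 - p0.2| := by
        rcases eq_or_lt_of_le (abs_nonneg (p0.1 - p0.2)) with h | h
        · exfalso
          have : p0.1 = p0.2 := by
            have := h.symm
            rw [abs_eq_zero, sub_eq_zero] at this; exact this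
          have hc : γ p0.1 - γ p0.2 = pt := hp0V.2
          rw [this, sub_self] at hc
          exact half_ne_zero hc.symm
        · exact h
      refine ⟨|p0.1 - p0.2|, hp0pos, fun x y hx hy hlt hc => ?_⟩
      have hmem : (x, y) ∈ V := ⟨⟨hx, hy⟩, hc⟩
      have := hp0min hmem
      simp only at this
      exact absurd hlt (not_lt.mpr this)
  obtain ⟨ε, hε, hkey⟩ := key
  obtain ⟨n, hn⟩ := exists_nat_one_div_lt hε
  refine ⟨n + 1, Nat.succ_pos n, fun x y hxy => ?_⟩
  set u : ℝ := Int.fract x with hu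
  set v : ℝ := y - ⌊x⌋ with hv
  have hγu : γ u = γ x := by
    have := hper x (-⌊x⌋)
    rw [show x + ((-⌊x⌋ : ℤ) : ℝ) = x - ⌊x⌋ by push_cast; ring] at this
    exact this
  have hγv : γ v = γ y := by
    have := hper y (-⌊x⌋)
    rw [show y + ((-⌊x⌋ : ℤ) : ℝ) = y - ⌊x⌋ by push_cast; ring] at this
    exact this
  have huv : u - v = x - y := by rw [hu, hv, Int.fract]; ring
  have hn1 : (1:ℝ) / (n + 1) ≤ 1 := by
    rw [div_le_one (by positivity)]
    norm_num
  have hu0 : 0 ≤ u := Int.fract_nonneg x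
  have hu1 : u < 1 := Int.fract_lt_one x
  have huK : u ∈ Icc (-1:ℝ) 2 := ⟨by linarith, by linarith⟩
  have habs : |u - v| ≤ 1 / (n+1) := by
    rw [huv]
    exact_mod_cast hxy
  have hvK : v ∈ Icc (-1:ℝ) 2 := by
    have := abs_le.mp habs
    constructor <;> [linarith [this.1, this.2]; linarith [this.1, this.2]]
  have hne : γ u - γ v ≠ pt := hkey u v huK hvK (lt_of_le_of_lt habs (by exact_mod_cast hn))
  rw [hγu, hγv] at hne
  exact hne

end SelfSemi

namespace SelfSemi

/-- Every continuous `1`-periodic map `ℝ → S¹` lifts to a continuous map `ℝ → ℝ`. -/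
lemma exists_lift {γ : ℝ → S1} (hγ : Continuous γ)
    (hper : ∀ (x : ℝ) (m : ℤ), γ (x + m) = γ x) :
    ∃ H : ℝ → ℝ, Continuous H ∧ ∀ x, proj (H x) = γ x := by
  obtain ⟨N, hN0, hgap⟩ := exists_gap hγ hper
  have hNR : (0:ℝ) < N := by exact_mod_cast hN0
  have hNne : (N:ℝ) ≠ 0 := ne_of_gt hNR
  set g : ℤ → ℝ := fun k => (k : ℝ) / N with hg
  have hgdiff : ∀ k : ℤ, g (k+1) - g k = 1/N := by
    intro k; simp only [hg]; push_cast; ring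
  have hNinvpos : (0:ℝ) < 1/N := by positivity
  have hglt : ∀ k : ℤ, g k < g (k + 1) := fun k => by
    have := hgdiff k; linarith
  set s : ℤ → ℝ := fun k => dl (γ (g (k+1)) - γ (g k)) with hs
  set S : ℤ → ℝ := fun k =>
    (∑ i ∈ Finset.range k.toNat, s (i : ℤ)) -
      ∑ i ∈ Finset.range (-k).toNat, s (-(i:ℤ) - 1) with hS
  have hSrec : ∀ k : ℤ, S (k+1) = S k + s k := by
    intro k
    rcases le_or_gt 0 k with hk | hk
    · have h1 : (k+1).toNat = k.toNat + 1 := by omega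
      have h2 : (-(k+1)).toNat = 0 := by omega
      have h3 : (-k).toNat = 0 := by omega
      have h4 : (k.toNat : ℤ) = k := Int.toNat_of_nonneg hk
      simp only [hS, h1, h2, h3, Finset.sum_range_succ, Finset.range_zero,
        Finset.sum_empty, h4]
      ring
    · have h1 : (k+1).toNat = 0 := by omega
      have h2 : k.toNat = 0 := by omega
      have h3 : (-k).toNat = (-(k+1)).toNat + 1 := by omega
      have h4 : ((-(k+1)).toNat : ℤ) = -k-1 := by omega
      simp only [hS, h1, h2, h3, Finset.sum_range_succ, Finset.range_zero,
        Finset.sum_empty, h4]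
      rw [show -(-k-1) - 1 = k by ring]
      ring
  set G : ℤ → ℝ → ℝ := fun k x => S k + dl (γ x - γ (g k)) with hG
  set H : ℝ → ℝ := fun x => G ⌊(N:ℝ) * x⌋ x with hH
  -- floor facts
  have hfloor : ∀ (k : ℤ) (x : ℝ), g k ≤ x → x < g (k+1) → ⌊(N:ℝ) * x⌋ = k := by
    intro k x h1 h2
    apply Int.floor_eq_iff.mpr
    constructor
    · rw [hg] at h1; simp only at h1
      rw [div_le_iff₀ hNR] at h1; linarith
    · rw [hg] at h2; simp only at h2
      rw [lt_div_iff₀ hNR] at h2; push_cast at h2 ⊢; linarith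
  have hfloorg : ∀ k : ℤ, ⌊(N:ℝ) * g k⌋ = k := by
    intro k
    rw [hg]; simp only
    rw [mul_div_cancel₀ _ hNne, Int.floor_intCast]
  -- agreement of H with the pieces
  have hagree : ∀ (k : ℤ) (x : ℝ), x ∈ Icc (g k) (g (k+1)) → H x = G k x := by
    intro k x hx
    rcases eq_or_lt_of_le hx.2 with heq | hlt
    · -- x = g (k+1)
      subst heq
      simp only [hH, hfloorg (k+1), hG, sub_self, dl_zero, add_zero, hSrec k, hs]
    · have hfl : ⌊(N:ℝ) * x⌋ = k := hfloor k x hx.1 hlt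
      simp only [hH, hfl]
  -- continuity of the pieces
  have hgapk : ∀ (k : ℤ) (x : ℝ), x ∈ Icc (g k) (g (k+1)) →
      γ x - γ (g k) ≠ (((-2⁻¹ : ℝ)) : S1) := by
    intro k x hx
    apply hgap
    rw [abs_of_nonneg (by linarith [hx.1])]
    have := hgdiff k
    linarith [hx.2]
  have hGcont : ∀ k : ℤ, ContinuousOn (G k) (Icc (g k) (g (k+1))) := by
    intro k x hx
    have hne := hgapk k x hx
    have h1 : ContinuousAt (fun y => γ y - γ (g k)) x :=
      (hγ.sub continuous_const).continuousAt
    have h2 := ContinuousAt.comp (x := x) (f := fun y => γ y - γ (g k)) (dl_cont hne) h1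
    exact (continuousAt_const.add h2).continuousWithinAt
  -- continuity of H
  have hHcont : Continuous H := by
    rw [continuous_iff_continuousAt]
    intro x
    set k := ⌊(N:ℝ) * x⌋ with hk
    have hx1 : g k ≤ x := by
      rw [hg]; simp only
      rw [div_le_iff₀ hNR]
      have := Int.floor_le ((N:ℝ) * x)
      rw [← hk] at this; linarith
    have hx2 : x < g (k+1) := by
      rw [hg]; simp only
      rw [lt_div_iff₀ hNR]
      have := Int.lt_floor_add_one ((N:ℝ) * x)
      rw [← hk] at this; push_cast; linarith
    have piece : ∀ k' : ℤ, x ∈ Icc (g k') (g (k'+1)) →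
        ContinuousWithinAt H (Icc (g k') (g (k'+1))) x := by
      intro k' hmem
      exact ((hGcont k') x hmem).congr (fun y hy => hagree k' y hy) (hagree k' x hmem)
    rw [continuousAt_iff_continuous_left_right]
    constructor
    · -- left
      rcases eq_or_lt_of_le hx1 with heq | hlt
      · -- x = g k, use piece (k-1)
        have hk1 : (k - 1) + 1 = k := by ring
        have hlt' : g (k-1) < g k := by have := hglt (k-1); rwa [hk1] at this
        have hmem : x ∈ Icc (g (k-1)) (g ((k-1)+1)) := by
          rw [hk1, ← heq]
          exact ⟨hlt'.le, le_refl _⟩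
        have hcw := piece (k-1) hmem
        apply hcw.mono_of_mem_nhdsWithin
        apply Filter.mem_of_superset
          (Filter.inter_mem (mem_nhdsWithin_of_mem_nhds
            (Ici_mem_nhds (lt_of_lt_of_le hlt' heq.le)))
            self_mem_nhdsWithin)
        rintro y ⟨hy1, hy2⟩
        rw [hk1]
        exact ⟨hy1, le_trans hy2 heq.ge⟩
      · -- g k < x, use piece k
        have hmem : x ∈ Icc (g k) (g (k+1)) := ⟨hx1, hx2.le⟩
        apply (piece k hmem).mono_of_mem_nhdsWithin
        apply Filter.mem_of_superset
          (Filter.inter_mem (mem_nhdsWithin_of_mem_nhds (Ici_mem_nhds hlt))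
            self_mem_nhdsWithin)
        rintro y ⟨hy1, hy2⟩
        exact ⟨hy1, le_trans hy2 hx2.le⟩
    · -- right, use piece k
      have hmem : x ∈ Icc (g k) (g (k+1)) := ⟨hx1, hx2.le⟩
      apply (piece k hmem).mono_of_mem_nhdsWithin
      apply Filter.mem_of_superset
        (Filter.inter_mem (mem_nhdsWithin_of_mem_nhds (Iic_mem_nhds hx2))
          self_mem_nhdsWithin)
      rintro y ⟨hy1, hy2⟩
      exact ⟨le_trans hx1 hy2, hy1⟩
  -- projection of S
  have hg0 : g 0 = 0 := by rw [hg]; simp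
  have hS0 : S 0 = 0 := by simp [hS]
  have hSproj : ∀ k : ℤ, proj (S k) = γ (g k) - γ 0 := by
    intro k
    induction k using Int.induction_on with
    | zero => rw [hS0, hg0, sub_self]; rfl
    | succ i ih =>
      rw [hSrec, proj_add, ih, hs]
      simp only
      rw [dl_proj]
      abel
    | pred i ih =>
      have hrec := hSrec (-(i:ℤ) - 1)
      rw [show -(i:ℤ) - 1 + 1 = -(i:ℤ) by ring] at hrec
      have : proj (S (-(i:ℤ) - 1)) = proj (S (-(i:ℤ))) - proj (s (-(i:ℤ) - 1)) := by
        rw [hrec, proj_add]; abel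
      rw [this, ih, hs]
      simp only
      rw [dl_proj, show -(i:ℤ) - 1 + 1 = -(i:ℤ) by ring]
      abel
  have hHproj : ∀ x, proj (H x) = γ x - γ 0 := by
    intro x
    simp only [hH, hG]
    rw [proj_add, hSproj, dl_proj]
    abel
  obtain ⟨r0, hr0⟩ := proj_surj (γ 0)
  refine ⟨fun x => H x + r0, hHcont.add continuous_const, fun x => ?_⟩
  rw [proj_add, hHproj, hr0]
  abel

end SelfSemi

namespace SelfSemi

lemma md_proj (d : ℤ) (x : ℝ) : md d (proj x) = proj ((d:ℝ) * x) := proj_zsmul d x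

lemma proj_per (x : ℝ) (m : ℤ) : proj (x + (m:ℝ)) = proj x := by
  rw [proj_add, proj_int, add_zero]

/-- Circle-level classification of maps commuting with `md d`, given a lift. -/
lemma classify {d : ℤ} (hd : 1 < |d|) {c : S1 → S1}
    (hcomm : ∀ z, c (md d z) = md d (c z))
    {H : ℝ → ℝ} (hHc : Continuous H) (hlift : ∀ x, proj (H x) = c (proj x))
    {e : ℤ} (he : ∀ x, H (x + 1) = H x + e) :
    ∃ k : ℤ, ∀ z, c z = e • z + proj ((k : ℝ) / ((d:ℝ) - 1)) := by
  have hsc : ∀ x, ∃ m : ℤ, H ((d:ℝ) * x) = (d:ℝ) * H x + m := by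
    intro x
    have h1 : proj (H ((d:ℝ) * x)) = proj ((d:ℝ) * H x) := by
      rw [hlift, ← md_proj, hcomm, ← hlift, md_proj]
    exact proj_eq_proj.mp h1
  obtain ⟨k, hk⟩ := lift_affine hd hHc he hsc
  refine ⟨k, fun z => ?_⟩
  obtain ⟨x, rfl⟩ := proj_surj z
  rw [← hlift, hk x, proj_add, ← proj_zsmul]

/-- Any continuous map commuting with `md d` has the form `z ↦ e • z + t`. -/
lemma form_of_continuous {d : ℤ} (hd : 1 < |d|) {c : S1 → S1} (hc : Continuous c)
    (hcomm : ∀ z, c (md d z) = md d (c z)) :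
    ∃ (e k : ℤ), ∀ z, c z = e • z + proj ((k : ℝ) / ((d:ℝ) - 1)) := by
  set γ : ℝ → S1 := fun x => c (proj x) with hγdef
  have hγ : Continuous γ := hc.comp continuous_proj
  have hper : ∀ (x : ℝ) (m : ℤ), γ (x + m) = γ x := by
    intro x m; simp only [hγdef, proj_per]
  obtain ⟨H, hHc, hlift⟩ := exists_lift hγ hper
  -- the degree e
  set f : ℝ → ℝ := fun x => H (x + 1) - H x with hfdef
  have hfc : Continuous f := ((hHc.comp (continuous_id.add continuous_const)).sub hHc)
  have hfi : ∀ x, ∃ m : ℤ, f x = m := by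
    intro x
    have h1 : proj (H (x + 1)) = proj (H x) := by
      rw [hlift, hlift]
      have := hper x 1
      simpa using this
    obtain ⟨m, hm⟩ := proj_eq_proj.mp h1
    exact ⟨m, by simp only [hfdef]; linarith⟩
  obtain ⟨e, he0⟩ := hfi 0
  have he : ∀ x, H (x + 1) = H x + e := by
    intro x
    have h1 : f x = f 0 := int_valued_const hfc hfi x
    rw [he0] at h1
    simp only [hfdef] at h1
    linarith
  obtain ⟨k, hk⟩ := classify hd hcomm hHc hlift he
  exact ⟨e, k, hk⟩

lemma half_ne_zero' : proj (2⁻¹ : ℝ) ≠ 0 := by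
  intro h
  obtain ⟨m, hm⟩ := proj_eq_zero_iff.mp h
  have : m = 0 := int_eq_zero_of_abs_lt (by linarith) (by linarith)
  rw [this] at hm
  norm_num at hm

/-- If `z ↦ e • z + t` is injective then `e = ± 1`. -/
lemma e_pm {e : ℤ} {t : S1} (hinj : Function.Injective (fun z : S1 => e • z + t)) :
    e = 1 ∨ e = -1 := by
  by_contra hcon
  push_neg at hcon
  obtain ⟨h1, h2⟩ := hcon
  rcases eq_or_ne e 0 with rfl | he0
  · have := hinj (a₁ := proj (2⁻¹ : ℝ)) (a₂ := 0) (by simp)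
    exact half_ne_zero' this
  · have heabs : 2 ≤ |e| := by rcases abs_cases e with ⟨heq, _⟩ | ⟨heq, _⟩ <;> rw [heq] <;> omega
    have heR : ((e:ℝ)) ≠ 0 := by exact_mod_cast he0
    have key : e • proj ((e:ℝ))⁻¹ + t = e • (0:S1) + t := by
      rw [proj_zsmul, mul_inv_cancel₀ heR, smul_zero, zero_add,
        show proj (1:ℝ) = 0 by simpa using proj_int 1, zero_add]
    have := hinj (a₁ := proj ((e:ℝ))⁻¹) (a₂ := 0) key
    obtain ⟨m, hm⟩ := proj_eq_zero_iff.mp this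
    have habs : |((e:ℝ))⁻¹| ≤ 2⁻¹ := by
      rw [abs_inv]
      rw [show ((2:ℝ))⁻¹ = (2:ℝ)⁻¹ by norm_num]
      apply inv_anti₀ (by norm_num)
      exact_mod_cast heabs
    rw [hm] at habs
    have : m = 0 := int_eq_zero_of_abs_lt (by cases abs_le.mp habs; linarith)
      (by cases abs_le.mp habs; linarith)
    rw [this] at hm
    simp at hm
    exact he0 hm

/-- `(d-1) • proj (j / (d-1)) = 0`. -/
lemma rot_torsion {d : ℤ} (hd : 1 < |d|) (j : ℤ) :
    (d - 1) • proj ((j:ℝ) / ((d:ℝ) - 1)) = 0 := by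
  have hdne : (d:ℝ) - 1 ≠ 0 := by
    have : d ≠ 1 := by intro h; rw [h] at hd; norm_num at hd
    intro h; exact this (by exact_mod_cast sub_eq_zero.mp h)
  rw [proj_zsmul]
  rw [show ((d - 1 : ℤ) : ℝ) * ((j:ℝ) / ((d:ℝ) - 1)) = (j:ℝ) by push_cast; field_simp]
  exact proj_int j

lemma d_smul_rot {d : ℤ} (hd : 1 < |d|) (j : ℤ) :
    d • proj ((j:ℝ) / ((d:ℝ) - 1)) = proj ((j:ℝ) / ((d:ℝ) - 1)) := by
  have h := rot_torsion hd j
  have h2 : d • proj ((j:ℝ) / ((d:ℝ) - 1)) =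
      (d - 1) • proj ((j:ℝ) / ((d:ℝ) - 1)) + (1:ℤ) • proj ((j:ℝ) / ((d:ℝ) - 1)) := by
    rw [← add_zsmul]; norm_num
  rw [h2, h, zero_add, one_zsmul]

end SelfSemi
namespace SelfSemi

lemma rot_eq (d j : ℤ) (z : S1) : rot d j z = z + proj ((j:ℝ)/((d:ℝ)-1)) := rfl

lemma rot_isHomeomorph (d j : ℤ) : IsHomeomorph (rot d j) :=
  (Homeomorph.addRight (proj ((j:ℝ)/((d:ℝ)-1)))).isHomeomorph

lemma rot_neg_isHomeomorph (d j : ℤ) : IsHomeomorph (fun z => rot d j (-z)) :=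
  ((Homeomorph.neg S1).trans (Homeomorph.addRight (proj ((j:ℝ)/((d:ℝ)-1))))).isHomeomorph

lemma rot_comm {d : ℤ} (hd : 1 < |d|) (j : ℤ) (z : S1) :
    rot d j (md d z) = md d (rot d j z) := by
  simp only [rot_eq, md, smul_add, d_smul_rot hd j]

lemma rot_neg_comm {d : ℤ} (hd : 1 < |d|) (j : ℤ) (z : S1) :
    rot d j (-(md d z)) = md d (rot d j (-z)) := by
  simp only [rot_eq, md, smul_add, smul_neg, d_smul_rot hd j]

/-- Forward classification: a homeomorphism commuting with `md d` is a rotation or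
a reflected rotation. -/
lemma homeo_comm_form {d : ℤ} (hd : 1 < |d|) {c : S1 → S1} (hc : IsHomeomorph c)
    (hcomm : ∀ z, c (md d z) = md d (c z)) :
    ∃ j : ℤ, (∀ z, c z = rot d j z) ∨ (∀ z, c z = rot d j (-z)) := by
  obtain ⟨e, k, hk⟩ := form_of_continuous hd hc.continuous hcomm
  have hinj : Function.Injective (fun z : S1 => e • z + proj ((k:ℝ)/((d:ℝ)-1))) := by
    have hfun : (fun z : S1 => e • z + proj ((k:ℝ)/((d:ℝ)-1))) = c := funext fun z => (hk z).symm
    rw [hfun]; exact hc.injective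
  rcases e_pm hinj with rfl | rfl
  · exact ⟨k, Or.inl fun z => by rw [hk z, one_zsmul]; rfl⟩
  · exact ⟨k, Or.inr fun z => by rw [hk z, neg_one_zsmul]; rfl⟩

/-- Part 1: every self-semiconjugacy of `md` is a homeomorphism. -/
lemma semiconj_isHomeomorph {d : ℤ} (hd : 1 < |d|) {h : S1 → S1}
    (hs : IsSemiconj (md d) h d) : IsHomeomorph h := by
  obtain ⟨hcont, hcomm, e, hepm, H, hHc, hlift, he⟩ := hs
  obtain ⟨k, hk⟩ := classify hd hcomm hHc hlift he
  rcases hepm with rfl | rfl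
  · have hfun : h = fun z => z + proj ((k:ℝ)/((d:ℝ)-1)) :=
      funext fun z => by rw [hk z, one_zsmul]
    rw [hfun]
    exact (Homeomorph.addRight (proj ((k:ℝ)/((d:ℝ)-1)))).isHomeomorph
  · have hfun : h = fun z => -z + proj ((k:ℝ)/((d:ℝ)-1)) :=
      funext fun z => by rw [hk z, neg_one_zsmul]
    rw [hfun]
    exact ((Homeomorph.neg S1).trans (Homeomorph.addRight (proj ((k:ℝ)/((d:ℝ)-1))))).isHomeomorph

/-- Part 2, as an iff. -/
lemma part2 {d : ℤ} (hd : 1 < |d|) (c : S1 → S1) :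
    (IsHomeomorph c ∧ ∀ z, c (md d z) = md d (c z)) ↔
      ∃ j : ℤ, (∀ z, c z = rot d j z) ∨ (∀ z, c z = rot d j (-z)) := by
  constructor
  · rintro ⟨hc, hcomm⟩; exact homeo_comm_form hd hc hcomm
  · rintro ⟨j, hj | hj⟩
    · have hfun : c = rot d j := funext hj
      subst hfun
      exact ⟨rot_isHomeomorph d j, fun z => rot_comm hd j z⟩
    · have hfun : c = fun z => rot d j (-z) := funext hj
      subst hfun
      exact ⟨rot_neg_isHomeomorph d j, fun z => rot_neg_comm hd j z⟩

end SelfSemi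

namespace SelfSemi

lemma proj_neg (x : ℝ) : proj (-x) = - proj x := rfl

lemma part3 {d : ℤ} (hd : 1 < |d|) :
    ∃ φ : DihedralGroup (d - 1).natAbs →
        {c : S1 ≃ₜ S1 // ∀ z, c (md d z) = md d (c z)},
      Function.Bijective φ ∧
        ∀ g₁ g₂, (φ (g₁ * g₂)).1 = ((φ g₂).1.trans (φ g₁).1) := by
  classical
  have hdne1 : d - 1 ≠ 0 := by
    have h' := hd
    rcases abs_cases d with ⟨he, _⟩ | ⟨he, _⟩ <;> rw [he] at h' <;> omega
  have hdR : (d:ℝ) - 1 ≠ 0 := by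
    intro h
    have h1 : (d:ℝ) = 1 := sub_eq_zero.mp h
    have h2 : d = 1 := by exact_mod_cast h1
    omega
  set n := (d - 1).natAbs with hn
  have hdvd : ((n:ℤ)) ∣ (d - 1) := Int.natAbs_dvd.mpr dvd_rfl
  have hdvd' : (d - 1) ∣ ((n:ℤ)) := Int.dvd_natAbs.mpr dvd_rfl
  -- the additive character ℤ →+ S¹
  have haZadd : ∀ i j : ℤ, proj (((i+j:ℤ):ℝ)/((d:ℝ)-1)) =
      proj ((i:ℝ)/((d:ℝ)-1)) + proj ((j:ℝ)/((d:ℝ)-1)) := by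
    intro i j
    rw [← proj_add]
    congr 1
    push_cast
    ring
  set aZ : ℤ →+ S1 := AddMonoidHom.mk' (fun j => proj ((j:ℝ)/((d:ℝ)-1))) haZadd with haZ'
  have haZdvd : ∀ m : ℤ, (d-1) ∣ m → aZ m = 0 := by
    rintro m ⟨q, rfl⟩
    show proj ((((d-1)*q : ℤ):ℝ)/((d:ℝ)-1)) = 0
    rw [show ((((d-1)*q : ℤ)):ℝ)/((d:ℝ)-1) = (q:ℝ) by push_cast; field_simp]
    exact proj_int q
  have haZn : aZ ((n:ℤ)) = 0 := haZdvd _ hdvd'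
  set a : ZMod n →+ S1 := ZMod.lift n ⟨aZ, haZn⟩ with ha
  have ha_int : ∀ j : ℤ, a ((j : ZMod n)) = proj ((j:ℝ)/((d:ℝ)-1)) :=
    fun j => ZMod.lift_coe n ⟨aZ, haZn⟩ j
  have ha_inj : Function.Injective a := by
    rw [ha, ZMod.lift_injective]
    intro m hm
    obtain ⟨l, hl⟩ := proj_eq_zero_iff.mp hm
    rw [div_eq_iff hdR] at hl
    have hml : m = l * (d-1) := by exact_mod_cast hl
    rw [ZMod.intCast_zmod_eq_zero_iff_dvd]
    exact dvd_trans hdvd ⟨l, by rw [hml]; ring⟩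
  have hfix : ∀ i : ZMod n, d • a i = a i := by
    intro i
    have hz : ((d - 1 : ℤ) : ZMod n) = 0 := (ZMod.intCast_zmod_eq_zero_iff_dvd _ n).mpr hdvd
    have h1 : (d - 1) • a i = 0 := by
      rw [← map_zsmul, zsmul_eq_mul, hz, zero_mul, map_zero]
    have h2 : d • a i = (d-1) • a i + (1:ℤ) • a i := by rw [← add_zsmul]; norm_num
    rw [h2, h1, zero_add, one_zsmul]
  -- the homeomorphisms
  set Φr : ZMod n → (S1 ≃ₜ S1) := fun i => Homeomorph.addRight (a i) with hΦr
  set Φs : ZMod n → (S1 ≃ₜ S1) :=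
    fun i => (Homeomorph.neg S1).trans (Homeomorph.addRight (-(a i))) with hΦs
  have hΦr_apply : ∀ (i : ZMod n) (z : S1), Φr i z = z + a i := fun _ _ => rfl
  have hΦs_apply : ∀ (i : ZMod n) (z : S1), Φs i z = -z + -(a i) := fun _ _ => rfl
  have hΦr_comm : ∀ (i : ZMod n) (z : S1), (Φr i) (md d z) = md d ((Φr i) z) := by
    intro i z
    rw [hΦr_apply, hΦr_apply]
    simp only [md, smul_add, hfix i]
  have hΦs_comm : ∀ (i : ZMod n) (z : S1), (Φs i) (md d z) = md d ((Φs i) z) := by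
    intro i z
    rw [hΦs_apply, hΦs_apply]
    simp only [md, smul_add, smul_neg, hfix i]
  refine ⟨fun g => match g with
    | DihedralGroup.r i => ⟨Φr i, hΦr_comm i⟩
    | DihedralGroup.sr i => ⟨Φs i, hΦs_comm i⟩, ⟨?_, ?_⟩, ?_⟩
  · -- injective
    rintro (i | i) (j | j) hgg <;> rw [Subtype.mk_eq_mk] at hgg
    · have hp : ∀ z, Φr i z = Φr j z := fun z => by rw [hgg]
      have h0 := hp 0
      rw [hΦr_apply, hΦr_apply, zero_add, zero_add] at h0
      rw [ha_inj h0]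
    · exfalso
      have hp : ∀ z, Φr i z = Φs j z := fun z => by rw [hgg]
      have h0 := hp 0
      rw [hΦr_apply, hΦs_apply, zero_add, neg_zero, zero_add] at h0
      have hq := hp (proj 4⁻¹)
      rw [hΦr_apply, hΦs_apply, ← h0] at hq
      have hq2 : proj 4⁻¹ = - proj 4⁻¹ := by
        have := add_right_cancel hq
        exact this
      have : proj 4⁻¹ + proj 4⁻¹ = 0 := eq_neg_iff_add_eq_zero.mp hq2
      rw [← proj_add, show (4⁻¹ + 4⁻¹ : ℝ) = 2⁻¹ by norm_num] at this
      exact half_ne_zero' this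
    · exfalso
      have hp : ∀ z, Φs i z = Φr j z := fun z => by rw [hgg]
      have h0 := hp 0
      rw [hΦr_apply, hΦs_apply, neg_zero, zero_add, zero_add] at h0
      have hq := hp (proj 4⁻¹)
      rw [hΦr_apply, hΦs_apply, h0] at hq
      have hq2 : - proj 4⁻¹ = proj 4⁻¹ := add_right_cancel hq
      have : proj 4⁻¹ + proj 4⁻¹ = 0 := eq_neg_iff_add_eq_zero.mp hq2.symm
      rw [← proj_add, show (4⁻¹ + 4⁻¹ : ℝ) = 2⁻¹ by norm_num] at this
      exact half_ne_zero' this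
    · have hp : ∀ z, Φs i z = Φs j z := fun z => by rw [hgg]
      have h0 := hp 0
      rw [hΦs_apply, hΦs_apply, neg_zero, zero_add, zero_add] at h0
      rw [ha_inj (neg_inj.mp h0)]
  · -- surjective
    rintro ⟨c, hcomm⟩
    obtain ⟨j, hj | hj⟩ := homeo_comm_form hd c.isHomeomorph hcomm
    · refine ⟨DihedralGroup.r ((j:ℤ) : ZMod n), ?_⟩
      apply Subtype.ext
      apply Homeomorph.ext
      intro z
      show Φr ((j:ℤ) : ZMod n) z = c z
      rw [hΦr_apply, ha_int j, hj z, rot_eq]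
    · refine ⟨DihedralGroup.sr (((-j : ℤ)) : ZMod n), ?_⟩
      apply Subtype.ext
      apply Homeomorph.ext
      intro z
      show Φs (((-j : ℤ)) : ZMod n) z = c z
      rw [hΦs_apply, ha_int (-j), hj z, rot_eq]
      congr 1
      rw [show (((-j : ℤ)):ℝ)/((d:ℝ)-1) = -((j:ℝ)/((d:ℝ)-1)) by push_cast; ring]
      rw [proj_neg, neg_neg]
  · -- anti-homomorphism to composition
    rintro (i | i) (j | j) <;>
      · apply Homeomorph.ext
        intro z
        simp only [DihedralGroup.r_mul_r, DihedralGroup.r_mul_sr, DihedralGroup.sr_mul_r,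
          DihedralGroup.sr_mul_sr, Homeomorph.trans_apply]
        show _ = _
        simp only [hΦr_apply, hΦs_apply, map_add, map_sub, map_neg]
        abel

end SelfSemi


/-- every semiconjugacy from `m_d` to itself is a homeomorphism;
the homeomorphisms commuting with `m_d` are exactly the rotations by `(|d-1|)`-th
roots of unity, possibly composed with complex conjugation (`z ↦ -z` additively);
and this group is isomorphic to the dihedral group `D_{d-1}`. -/
theorem self_semiconjugacies_of_md
    (d : ℤ) (hd : 1 < |d|) :
    (∀ h : S1 → S1, IsSemiconj (md d) h d → IsHomeomorph h) ∧
    (∀ c : S1 → S1,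
      (IsHomeomorph c ∧ ∀ z, c (md d z) = md d (c z)) ↔
        ∃ j : ℤ, (∀ z, c z = rot d j z) ∨ (∀ z, c z = rot d j (-z))) ∧
    (∃ φ : DihedralGroup (d - 1).natAbs →
        {c : S1 ≃ₜ S1 // ∀ z, c (md d z) = md d (c z)},
      Function.Bijective φ ∧
        ∀ g₁ g₂, (φ (g₁ * g₂)).1 = ((φ g₂).1.trans (φ g₁).1)) :=
  ⟨fun _ hs => SelfSemi.semiconj_isHomeomorph hd hs,
    fun c => SelfSemi.part2 hd c, SelfSemi.part3 hd⟩
end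
end

section
/- Let f : S¹ → S¹ be a covering map of degree d with |d| > 1. Then the set of periodic points of f is dense in the nonwandering set Ω(f). -/
noncomputable section

/-- The nonwandering set of `f`. -/
def nonwandering (f : S1 → S1) : Set S1 :=
  {x | ∀ U ∈ nhds x, ∃ n : ℕ, 0 < n ∧ (f^[n] '' U ∩ U).Nonempty}

namespace Aux

open Set Filter Function Metric Topology

lemma proj_continuous : Continuous proj := continuous_quotient_mk'

lemma proj_isOpenMap : IsOpenMap proj := QuotientAddGroup.isOpenMap_coe

lemma proj_int (k : ℤ) : proj (k : ℝ) = 0 := by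
  have : ((k : ℝ) : S1) = 0 := by
    rw [QuotientAddGroup.eq_zero_iff]
    exact ⟨k, by simp⟩
  exact this

lemma proj_add_int (x : ℝ) (k : ℤ) : proj (x + k) = proj x := by
  show ((x + (k:ℝ) : ℝ) : S1) = (x : S1)
  rw [AddCircle.coe_add]
  have : ((k : ℝ) : S1) = 0 := proj_int k
  rw [this, add_zero]

lemma proj_eq_iff {a b : ℝ} : proj a = proj b ↔ ∃ k : ℤ, b = a + k := by
  constructor
  · intro h
    have h' : -a + b ∈ AddSubgroup.zmultiples (1:ℝ) := (QuotientAddGroup.eq (s := AddSubgroup.zmultiples (1:ℝ))).1 h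
    obtain ⟨k, hk⟩ := h'
    exact ⟨k, by simp at hk; linarith [hk]⟩
  · rintro ⟨k, rfl⟩
    exact (proj_add_int a k).symm

lemma proj_inj_of_close {a b : ℝ} (h : proj a = proj b) (hcl : |a - b| < 1) : a = b := by
  obtain ⟨k, rfl⟩ := proj_eq_iff.1 h
  have hk : |(k:ℝ)| < 1 := by
    have e : a - (a + k) = -(k:ℝ) := by ring
    rw [e, abs_neg] at hcl; exact hcl
  have hk2 : |k| < 1 := by exact_mod_cast (show ((|k|:ℤ):ℝ) < 1 by rwa [← Int.cast_abs] at hk)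
  have : k = 0 := by
    rcases abs_lt.1 hk2 with ⟨h1, h2⟩; omega
  simp [this]

section Fprops

variable {d : ℤ} {F : ℝ → ℝ}

lemma Fz (hdeg : ∀ x : ℝ, F (x + 1) = F x + d) :
    ∀ (k : ℤ) (x : ℝ), F (x + k) = F x + k * d := by
  intro k
  induction k using Int.induction_on with
  | zero => intro x; simp
  | succ n ih =>
      intro x
      have e : (x + (n + 1 : ℤ) : ℝ) = (x + n) + 1 := by push_cast; ring
      rw [e, hdeg]
      have := ih x
      push_cast at this ⊢
      linarith
  | pred n ih =>
      intro x
      have e : (x + (-n : ℤ) : ℝ) = (x + (-n - 1 : ℤ)) + 1 := by push_cast; ring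
      have := hdeg (x + (-n - 1 : ℤ))
      rw [← e] at this
      have h2 := ih x
      rw [this] at h2
      push_cast at h2 ⊢
      linarith

lemma Fiter_shift (hdeg : ∀ x : ℝ, F (x + 1) = F x + d) :
    ∀ (n : ℕ) (k : ℤ) (x : ℝ), F^[n] (x + k) = F^[n] x + (k * d ^ n : ℤ) := by
  intro n
  induction n with
  | zero => intro k x; simp
  | succ n ih =>
      intro k x
      rw [Function.iterate_succ_apply', Function.iterate_succ_apply', ih, Fz hdeg]
      push_cast; ring

lemma exists_bound (hF : Continuous F) (hdeg : ∀ x : ℝ, F (x + 1) = F x + d) :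
    ∃ C : ℝ, 0 ≤ C ∧ ∀ x, |F x - d * x| ≤ C := by
  set g : ℝ → ℝ := fun x => F x - d * x with hg
  have hgc : Continuous g := hF.sub (continuous_const.mul continuous_id)
  obtain ⟨C, hC⟩ := (isCompact_Icc (a := (0:ℝ)) (b := 1)).exists_bound_of_continuousOn
    hgc.continuousOn
  refine ⟨max C 0, le_max_right _ _, fun x => ?_⟩
  have hper : ∀ (k : ℤ) (y : ℝ), g (y + k) = g y := by
    intro k y
    simp only [hg]
    rw [Fz hdeg]
    push_cast; ring
  have h1 : g x = g (Int.fract x) := by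
    have e : Int.fract x = x + (-⌊x⌋ : ℤ) := by
      rw [Int.fract]; push_cast; ring
    rw [e, hper]
  have h2 : Int.fract x ∈ Icc (0:ℝ) 1 :=
    ⟨Int.fract_nonneg x, (Int.fract_lt_one x).le⟩
  calc |g x| = ‖g (Int.fract x)‖ := by rw [h1]; rfl
    _ ≤ C := hC _ h2
    _ ≤ max C 0 := le_max_left _ _

lemma no_interior_max (hF : Continuous F)
    (hloc : ∀ τ : ℝ, ∃ δ > 0, InjOn F (ball τ δ)) {a b mx : ℝ}
    (ha : a < mx) (hb : mx < b) (hmax : ∀ t ∈ Icc a b, F t ≤ F mx) : False := by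
  obtain ⟨δ, hδ, hinj⟩ := hloc mx
  set δ' : ℝ := min (δ/2) (min (mx - a) (b - mx)) with hδ'
  have hδ'pos : 0 < δ' := by
    apply lt_min (by linarith) (lt_min (by linarith) (by linarith))
  have hδ'δ : δ' < δ := lt_of_le_of_lt (min_le_left _ _) (by linarith)
  set t1 := mx - δ' with ht1
  set t2 := mx + δ' with ht2
  have ht1m : t1 ∈ Icc a b := by
    constructor
    · have : δ' ≤ mx - a := le_trans (min_le_right _ _) (min_le_left _ _)
      simp only [ht1]; linarith
    · simp only [ht1]; linarith
  have ht2m : t2 ∈ Icc a b := by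
    constructor
    · simp only [ht2]; linarith
    · have : δ' ≤ b - mx := le_trans (min_le_right _ _) (min_le_right _ _)
      simp only [ht2]; linarith
  have hmem : ∀ s : ℝ, t1 ≤ s → s ≤ t2 → s ∈ ball mx δ := by
    intro s h1 h2
    rw [mem_ball, Real.dist_eq]
    rw [abs_lt]; constructor <;> [simp only [ht1] at h1; simp only [ht2] at h2] <;> linarith
  have hmxball : mx ∈ ball mx δ := mem_ball_self hδ
  have hF1 : F t1 < F mx := by
    rcases lt_or_eq_of_le (hmax t1 ht1m) with h | h
    · exact h
    · exfalso
      have := hinj (hmem t1 le_rfl (by simp only [ht1, ht2]; linarith)) hmxball h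
      simp only [ht1] at this; linarith
  have hF2 : F t2 < F mx := by
    rcases lt_or_eq_of_le (hmax t2 ht2m) with h | h
    · exact h
    · exfalso
      have := hinj (hmem t2 (by simp only [ht1, ht2]; linarith) le_rfl) hmxball h
      simp only [ht2] at this; linarith
  set y := max (F t1) (F t2) with hy
  have hyF : y < F mx := max_lt hF1 hF2
  obtain ⟨s1, hs1m, hs1⟩ := intermediate_value_Icc (by simp only [ht1]; linarith : t1 ≤ mx)
    hF.continuousOn ⟨le_max_left _ _, hyF.le⟩
  obtain ⟨s2, hs2m, hs2⟩ := intermediate_value_Icc' (by simp only [ht2]; linarith : mx ≤ t2)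
    hF.continuousOn ⟨le_max_right _ _, hyF.le⟩
  have hs1ne : s1 ≠ mx := by intro h; rw [h] at hs1; linarith
  have : s1 = s2 := hinj (hmem s1 hs1m.1 (le_trans hs1m.2 (by simp only [ht1,ht2]; linarith)))
    (hmem s2 (le_trans (by simp only [ht1,ht2]; linarith) hs2m.1) hs2m.2) (by rw [hs1, hs2])
  have h2 : mx ≤ s1 := by rw [this]; exact hs2m.1
  exact hs1ne (le_antisymm hs1m.2 h2)

lemma F_injective (hF : Continuous F)
    (hloc : ∀ τ : ℝ, ∃ δ > 0, InjOn F (ball τ δ)) : Injective F := by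
  have key : ∀ a b : ℝ, a < b → F a = F b → False := by
    intro a b hab heq
    obtain ⟨mx, hmxm, hmx⟩ := isCompact_Icc.exists_isMaxOn (nonempty_Icc.2 hab.le)
      hF.continuousOn
    obtain ⟨mn, hmnm, hmn⟩ := isCompact_Icc.exists_isMinOn (nonempty_Icc.2 hab.le)
      hF.continuousOn
    rw [isMaxOn_iff] at hmx
    rw [isMinOn_iff] at hmn
    by_cases h1 : F a < F mx
    · have hne1 : mx ≠ a := by intro h; rw [h] at h1; linarith
      have hne2 : mx ≠ b := by intro h; rw [h] at h1; rw [heq] at h1; linarith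
      exact no_interior_max hF hloc (lt_of_le_of_ne hmxm.1 (Ne.symm hne1))
        (lt_of_le_of_ne hmxm.2 hne2) hmx
    · by_cases h2 : F mn < F a
      · have hne1 : mn ≠ a := by intro h; rw [h] at h2; linarith
        have hne2 : mn ≠ b := by intro h; rw [h] at h2; rw [heq] at h2; linarith
        have hloc' : ∀ τ : ℝ, ∃ δ > 0, InjOn (fun t => -F t) (ball τ δ) := by
          intro τ; obtain ⟨δ, hδ, hinj⟩ := hloc τ
          exact ⟨δ, hδ, fun s hs t ht h => hinj hs ht (by simpa using h)⟩
        refine no_interior_max (hF.neg) hloc' (lt_of_le_of_ne hmnm.1 (Ne.symm hne1))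
          (lt_of_le_of_ne hmnm.2 hne2) ?_
        intro t htm
        simp only [Pi.neg_apply, neg_le_neg_iff]
        exact hmn t htm
      · -- F constant on [a,b]
        push_neg at h1 h2
        have hconst : ∀ t ∈ Icc a b, F t = F a := by
          intro t htm
          have := hmx t htm
          have := hmn t htm
          have hma := hmx a (left_mem_Icc.2 hab.le)
          have hmna := hmn a (left_mem_Icc.2 hab.le)
          linarith
        obtain ⟨δ, hδ, hinj⟩ := hloc ((a+b)/2)
        set δ' := min (δ/2) ((b-a)/2) with hδ'
        have hδ'pos : 0 < δ' := lt_min (by linarith) (by linarith)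
        set t1 := (a+b)/2 with ht1
        set t2 := (a+b)/2 + δ'/2 with ht2
        have hm1 : t1 ∈ ball ((a+b)/2) δ := mem_ball_self hδ
        have hm2 : t2 ∈ ball ((a+b)/2) δ := by
          rw [mem_ball, Real.dist_eq]
          have : δ' ≤ δ/2 := min_le_left _ _
          rw [abs_lt]; constructor <;> simp only [ht2] <;> linarith
        have hi1 : t1 ∈ Icc a b := by
          constructor <;> simp only [ht1] <;> linarith
        have hi2 : t2 ∈ Icc a b := by
          have : δ' ≤ (b-a)/2 := min_le_right _ _
          constructor <;> simp only [ht2] <;> linarith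
        have : t1 = t2 := hinj hm1 hm2 (by rw [hconst t1 hi1, hconst t2 hi2])
        simp only [ht1, ht2] at this; linarith
  intro a b hab
  by_contra hne
  rcases lt_or_gt_of_ne hne with h | h
  · exact key a b h hab
  · exact key b a h hab.symm

lemma F_sign (hd : 1 < |d|) (hdeg : ∀ x : ℝ, F (x + 1) = F x + d)
    (hdi : StrictMono F ∨ StrictAnti F) :
    (0 < d ∧ StrictMono F) ∨ (d < 0 ∧ StrictAnti F) := by
  have e := hdeg 0
  rcases hdi with h | h
  · left; refine ⟨?_, h⟩
    have h01 : F 0 < F (0 + 1) := h (by linarith)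
    rw [e] at h01
    have : (0:ℝ) < d := by linarith
    exact_mod_cast this
  · right; refine ⟨?_, h⟩
    have h01 : F (0 + 1) < F 0 := h (by linarith)
    rw [e] at h01
    have : (d:ℝ) < 0 := by linarith
    exact_mod_cast this

lemma iter_sign (hsgn : (0 < d ∧ StrictMono F) ∨ (d < 0 ∧ StrictAnti F)) :
    ∀ n : ℕ, (0 < (d:ℝ) ^ n ∧ Monotone F^[n]) ∨ ((d:ℝ) ^ n < 0 ∧ Antitone F^[n]) := by
  have hd0 : (d:ℝ) ≠ 0 := by
    rcases hsgn with ⟨h, _⟩ | ⟨h, _⟩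
    · exact_mod_cast h.ne'
    · exact_mod_cast h.ne
  intro n
  induction n with
  | zero => left; simp [monotone_id]
  | succ n ih =>
      have hit : F^[n+1] = fun x => F (F^[n] x) := by
        funext x; exact Function.iterate_succ_apply' F n x
      rcases hsgn with ⟨hd, hm⟩ | ⟨hd, hm⟩
      · have hdr : (0:ℝ) < d := by exact_mod_cast hd
        rcases ih with ⟨hp, hmo⟩ | ⟨hp, hmo⟩
        · left
          constructor
          · rw [pow_succ]; positivity
          · rw [hit]; exact fun x y hxy => (hm.monotone (hmo hxy))
        · right
          constructor
          · rw [pow_succ]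
            apply mul_neg_of_neg_of_pos hp hdr
          · rw [hit]; exact fun x y hxy => hm.monotone (hmo hxy)
      · have hdr : (d:ℝ) < 0 := by exact_mod_cast hd
        rcases ih with ⟨hp, hmo⟩ | ⟨hp, hmo⟩
        · right
          constructor
          · rw [pow_succ]
            apply mul_neg_of_pos_of_neg hp hdr
          · rw [hit]; exact fun x y hxy => hm.antitone (hmo hxy)
        · left
          constructor
          · rw [pow_succ]
            nlinarith
          · rw [hit]; exact fun x y hxy => hm.antitone (hmo hxy)

lemma un_mono (hsgn : (0 < d ∧ StrictMono F) ∨ (d < 0 ∧ StrictAnti F)) (n : ℕ) :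
    Monotone (fun x => F^[n] x / (d:ℝ) ^ n) := by
  rcases iter_sign hsgn n with ⟨hp, hm⟩ | ⟨hp, hm⟩
  · intro x y hxy
    exact div_le_div_of_nonneg_right (hm hxy) hp.le |>.trans_eq rfl
  · intro x y hxy
    have := hm hxy
    simp only
    rw [div_le_div_right_of_neg hp]
    exact this

end Fprops

section Hconstruct

variable (d : ℤ) (F : ℝ → ℝ)

def term (n : ℕ) (x : ℝ) : ℝ := F^[n+1] x / (d:ℝ)^(n+1) - F^[n] x / (d:ℝ)^n

def Hfun (x : ℝ) : ℝ := x + ∑' n, term d F n x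

variable {d F}

lemma habs (hd : 1 < |d|) : (2:ℝ) ≤ |(d:ℝ)| := by
  have : (2:ℤ) ≤ |d| := Int.add_one_le_of_lt hd
  calc (2:ℝ) = ((2:ℤ):ℝ) := by norm_num
    _ ≤ ((|d|:ℤ):ℝ) := by exact_mod_cast this
    _ = |(d:ℝ)| := by push_cast; rfl

lemma d_ne (hd : 1 < |d|) : (d:ℝ) ≠ 0 := by
  have : d ≠ 0 := by rintro rfl; simp at hd
  exact_mod_cast this

lemma term_eq (hd : 1 < |d|) (n : ℕ) (x : ℝ) :
    term d F n x = (F (F^[n] x) - d * F^[n] x) / (d:ℝ)^(n+1) := by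
  have h0 : (d:ℝ) ≠ 0 := d_ne hd
  have hp : ((d:ℝ)^n) ≠ 0 := pow_ne_zero _ h0
  rw [term, Function.iterate_succ_apply']
  field_simp
  ring

lemma term_bound {C : ℝ} (hd : 1 < |d|) (hC0 : 0 ≤ C) (hC : ∀ x, |F x - d * x| ≤ C)
    (n : ℕ) (x : ℝ) : |term d F n x| ≤ C * (2⁻¹:ℝ)^(n+1) := by
  rw [term_eq hd, abs_div]
  have h2 : ((2:ℝ))^(n+1) ≤ |(d:ℝ)^(n+1)| := by
    rw [abs_pow]
    exact pow_le_pow_left₀ (by norm_num) (habs hd) _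
  have hpos : (0:ℝ) < 2^(n+1) := by positivity
  calc |F (F^[n] x) - ↑d * F^[n] x| / |(d:ℝ)^(n+1)| ≤ C / 2^(n+1) := by
        apply div_le_div₀ hC0 (hC _) hpos h2
    _ = C * (2⁻¹)^(n+1) := by rw [div_eq_mul_inv, inv_pow]

lemma bound_summable {C : ℝ} : Summable (fun n : ℕ => C * (2⁻¹:ℝ)^(n+1)) := by
  have h : Summable (fun n : ℕ => (2⁻¹:ℝ)^n) :=
    summable_geometric_of_lt_one (by norm_num) (by norm_num)
  have := (h.mul_left (C * 2⁻¹)).congr (f := fun n => C * 2⁻¹ * (2⁻¹:ℝ)^n)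
    (g := fun n => C * (2⁻¹:ℝ)^(n+1)) ?_
  · exact this
  · intro n
    show C * 2⁻¹ * (2⁻¹:ℝ)^n = C * (2⁻¹:ℝ)^(n+1)
    rw [pow_succ]; ring

lemma term_summable {C : ℝ} (hd : 1 < |d|) (hC0 : 0 ≤ C) (hC : ∀ x, |F x - d * x| ≤ C)
    (x : ℝ) : Summable (fun n => term d F n x) := by
  apply Summable.of_norm_bounded bound_summable
  intro n
  rw [Real.norm_eq_abs]
  exact term_bound hd hC0 hC n x

lemma tendsto_un {C : ℝ} (hd : 1 < |d|) (hC0 : 0 ≤ C) (hC : ∀ x, |F x - d * x| ≤ C)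
    (x : ℝ) : Tendsto (fun n => F^[n] x / (d:ℝ)^n) atTop (𝓝 (Hfun d F x)) := by
  have hs := (term_summable hd hC0 hC x).hasSum
  have h1 := hs.tendsto_sum_nat
  have h2 : ∀ n, ∑ i ∈ Finset.range n, term d F i x = F^[n] x / (d:ℝ)^n - x := by
    intro n
    have h0 : (F^[0] x / (d:ℝ)^0) = x := by simp
    calc ∑ i ∈ Finset.range n, term d F i x
        = F^[n] x / (d:ℝ)^n - F^[0] x / (d:ℝ)^0 :=
          Finset.sum_range_sub (f := fun i => F^[i] x / (d:ℝ)^i) n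
      _ = F^[n] x / (d:ℝ)^n - x := by rw [h0]
  have h3 : Tendsto (fun n => F^[n] x / (d:ℝ)^n - x) atTop (𝓝 (∑' n, term d F n x)) := by
    apply h1.congr
    intro n; exact h2 n
  have h4 := h3.add_const x
  simp only [sub_add_cancel] at h4
  have : (∑' n, term d F n x) + x = Hfun d F x := by rw [Hfun]; ring
  rwa [this] at h4

lemma H_cont {C : ℝ} (hd : 1 < |d|) (hF : Continuous F) (hC0 : 0 ≤ C)
    (hC : ∀ x, |F x - d * x| ≤ C) : Continuous (Hfun d F) := by
  apply continuous_id.add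
  apply continuous_tsum (u := fun n => C * (2⁻¹:ℝ)^(n+1))
  · intro n
    exact ((hF.iterate (n+1)).div_const _).sub ((hF.iterate n).div_const _)
  · exact bound_summable
  · intro n x
    rw [Real.norm_eq_abs]
    exact term_bound hd hC0 hC n x

lemma H_mono {C : ℝ} (hd : 1 < |d|) (hC0 : 0 ≤ C) (hC : ∀ x, |F x - d * x| ≤ C)
    (hsgn : (0 < d ∧ StrictMono F) ∨ (d < 0 ∧ StrictAnti F)) : Monotone (Hfun d F) := by
  intro x y hxy
  exact le_of_tendsto_of_tendsto' (tendsto_un hd hC0 hC x) (tendsto_un hd hC0 hC y)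
    (fun n => un_mono hsgn n hxy)

lemma H_shift {C : ℝ} (hd : 1 < |d|) (hC0 : 0 ≤ C) (hC : ∀ x, |F x - d * x| ≤ C)
    (hdeg : ∀ x : ℝ, F (x + 1) = F x + d) (k : ℤ) (x : ℝ) :
    Hfun d F (x + k) = Hfun d F x + k := by
  have h1 := tendsto_un hd hC0 hC (x + (k:ℝ))
  have h2 := (tendsto_un hd hC0 hC x).add_const (k:ℝ)
  have h3 : (fun n => F^[n] (x + (k:ℝ)) / (d:ℝ)^n) =
      fun n => F^[n] x / (d:ℝ)^n + k := by
    funext n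
    rw [Fiter_shift hdeg n k x]
    have hdn : ((d:ℝ))^n ≠ 0 := pow_ne_zero _ (d_ne hd)
    push_cast
    field_simp
  rw [h3] at h1
  exact tendsto_nhds_unique h1 h2

lemma H_F {C : ℝ} (hd : 1 < |d|) (hC0 : 0 ≤ C) (hC : ∀ x, |F x - d * x| ≤ C) (x : ℝ) :
    Hfun d F (F x) = d * Hfun d F x := by
  have h1 := tendsto_un hd hC0 hC (F x)
  have h2 := ((tendsto_un hd hC0 hC x).comp (tendsto_add_atTop_nat 1)).const_mul ((d:ℝ))
  have h3 : (fun n => (d:ℝ) * ((fun n => F^[n] x / (d:ℝ)^n) ∘ (fun n => n + 1)) n) =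
      fun n => F^[n] (F x) / (d:ℝ)^n := by
    funext n
    simp only [Function.comp_apply]
    rw [← Function.iterate_succ_apply F n x]
    have hdn : ((d:ℝ))^n ≠ 0 := pow_ne_zero _ (d_ne hd)
    have hd0 : (d:ℝ) ≠ 0 := d_ne hd
    rw [pow_succ]
    field_simp
  rw [h3] at h2
  exact tendsto_nhds_unique h1 h2

lemma H_iter {C : ℝ} (hd : 1 < |d|) (hC0 : 0 ≤ C) (hC : ∀ x, |F x - d * x| ≤ C)
    (m : ℕ) (x : ℝ) : Hfun d F (F^[m] x) = (d:ℝ)^m * Hfun d F x := by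
  induction m with
  | zero => simp
  | succ m ih =>
      rw [Function.iterate_succ_apply', H_F hd hC0 hC, ih, pow_succ]
      ring

lemma H_shift' {C : ℝ} (hd : 1 < |d|) (hC0 : 0 ≤ C) (hC : ∀ x, |F x - d * x| ≤ C)
    (hdeg : ∀ x : ℝ, F (x + 1) = F x + d) (k : ℤ) (x : ℝ) :
    Hfun d F (x - k) = Hfun d F x - k := by
  have := H_shift hd hC0 hC hdeg (-k) x
  push_cast at this
  rw [← sub_eq_add_neg] at this
  rw [this]; ring

end Hconstruct

section Interval

lemma sign_const {g : ℝ → ℝ} (hg : Continuous g) {lo hi : ℝ}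
    (hne : ∀ s ∈ Icc lo hi, g s ≠ 0) :
    (∀ s ∈ Icc lo hi, 0 < g s) ∨ (∀ s ∈ Icc lo hi, g s < 0) := by
  by_contra h
  push_neg at h
  obtain ⟨⟨a, ha, hga⟩, ⟨b, hb, hgb⟩⟩ := h
  have hga' : g a < 0 := lt_of_le_of_ne hga (hne a ha)
  have hgb' : 0 < g b := lt_of_le_of_ne hgb (Ne.symm (hne b hb))
  rcases le_total a b with hab | hab
  · obtain ⟨z, hz, hz0⟩ := intermediate_value_Icc hab hg.continuousOn
      ⟨hga'.le, hgb'.le⟩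
    exact hne z (Icc_subset_Icc ha.1 hb.2 hz) hz0
  · obtain ⟨z, hz, hz0⟩ := intermediate_value_Icc' hab hg.continuousOn
      ⟨hga'.le, hgb'.le⟩
    exact hne z (Icc_subset_Icc hb.1 ha.2 hz) hz0

lemma orbit_above {σ : ℝ → ℝ} (hm : Monotone σ) {u : ℝ} (hu : u ≤ σ u) :
    ∀ i, u ≤ σ^[i] u := by
  intro i
  induction i with
  | zero => simp
  | succ i ih =>
      rw [Function.iterate_succ_apply']
      exact le_trans hu (hm ih)

lemma orbit_ge {σ : ℝ → ℝ} (hm : Monotone σ) {u : ℝ} (hu : u ≤ σ u) :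
    ∀ j, 1 ≤ j → σ u ≤ σ^[j] u := by
  intro j hj
  obtain ⟨i, rfl⟩ := Nat.exists_eq_add_of_le hj
  rw [add_comm, Function.iterate_succ_apply']
  exact hm (orbit_above hm hu i)

lemma orbit_below {σ : ℝ → ℝ} (hm : Monotone σ) {u : ℝ} (hu : σ u ≤ u) :
    ∀ i, σ^[i] u ≤ u := by
  intro i
  induction i with
  | zero => simp
  | succ i ih =>
      rw [Function.iterate_succ_apply']
      exact le_trans (hm ih) hu

lemma orbit_le {σ : ℝ → ℝ} (hm : Monotone σ) {u : ℝ} (hu : σ u ≤ u) :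
    ∀ j, 1 ≤ j → σ^[j] u ≤ σ u := by
  intro j hj
  obtain ⟨i, rfl⟩ := Nat.exists_eq_add_of_le hj
  rw [add_comm, Function.iterate_succ_apply']
  exact hm (orbit_below hm hu i)

lemma orbit_le_fix {σ : ℝ → ℝ} (hm : Monotone σ) {u p : ℝ} (hp : σ p = p) (hu : u ≤ p) :
    ∀ i, σ^[i] u ≤ p := by
  intro i
  induction i with
  | zero => simpa
  | succ i ih =>
      rw [Function.iterate_succ_apply']
      calc σ (σ^[i] u) ≤ σ p := hm ih
        _ = p := hp

lemma orbit_ge_fix {σ : ℝ → ℝ} (hm : Monotone σ) {u p : ℝ} (hp : σ p = p) (hu : p ≤ u) :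
    ∀ i, p ≤ σ^[i] u := by
  intro i
  induction i with
  | zero => simpa
  | succ i ih =>
      rw [Function.iterate_succ_apply']
      calc p = σ p := hp.symm
        _ ≤ σ (σ^[i] u) := hm ih

lemma mono_return_fix {σ : ℝ → ℝ} (hσc : Continuous σ) (hm : Monotone σ) {c η : ℝ}
    (hη : 0 < η)
    (hret : ∀ δ, 0 < δ → δ ≤ η → ∃ j, 1 ≤ j ∧ ∃ u, |u - c| < δ ∧ |σ^[j] u - c| < δ) :
    ∃ s, |s - c| ≤ η ∧ σ s = s := by
  by_contra hno
  push_neg at hno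
  have hne : ∀ s ∈ Icc (c-η) (c+η), σ s - s ≠ 0 := by
    intro s hs h0
    exact hno s (abs_le.2 ⟨by linarith [hs.1], by linarith [hs.2]⟩) (by linarith)
  have hg : Continuous (fun s => σ s - s) := hσc.sub continuous_id
  obtain ⟨t0, ht0m, ht0⟩ := isCompact_Icc.exists_isMinOn
    (⟨c, by constructor <;> linarith⟩ : (Icc (c-η) (c+η)).Nonempty) hg.continuousOn
  rw [isMinOn_iff] at ht0
  rcases sign_const hg hne with hpos | hneg
  · set γ := σ t0 - t0 with hγ
    have hγpos : 0 < γ := hpos t0 ht0m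
    set δ := min (γ/2) η with hδ
    have hδpos : 0 < δ := lt_min (by linarith) hη
    obtain ⟨j, hj, u, hu, hju⟩ := hret δ hδpos (min_le_right _ _)
    have huI : u ∈ Icc (c-η) (c+η) := by
      have := abs_lt.1 hu
      have hd2 : δ ≤ η := min_le_right _ _
      constructor <;> linarith [this.1, this.2]
    have h1 : u + γ ≤ σ u := by
      have := ht0 u huI
      simp only [hγ]; linarith
    have h2 : c + δ < σ u := by
      have hab := abs_lt.1 hu
      have hcu : c - δ < u := by linarith [hab.1]
      have hd1 : δ ≤ γ/2 := min_le_left _ _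
      linarith
    have h3 : σ u ≤ σ^[j] u := orbit_ge hm (by linarith) j hj
    have := abs_lt.1 hju
    linarith [this.2]
  · obtain ⟨t1, ht1m, ht1⟩ := isCompact_Icc.exists_isMaxOn
      (⟨c, by constructor <;> linarith⟩ : (Icc (c-η) (c+η)).Nonempty) hg.continuousOn
    rw [isMaxOn_iff] at ht1
    set γ := -(σ t1 - t1) with hγ
    have hγpos : 0 < γ := by have := hneg t1 ht1m; simp only [hγ]; linarith
    set δ := min (γ/2) η with hδ
    have hδpos : 0 < δ := lt_min (by linarith) hη
    obtain ⟨j, hj, u, hu, hju⟩ := hret δ hδpos (min_le_right _ _)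
    have huI : u ∈ Icc (c-η) (c+η) := by
      have := abs_lt.1 hu
      have hd2 : δ ≤ η := min_le_right _ _
      constructor <;> linarith [this.1, this.2]
    have h1 : σ u ≤ u - γ := by
      have := ht1 u huI
      simp only [hγ]; linarith
    have h2 : σ u < c - δ := by
      have hab := abs_lt.1 hu
      have hd1 : δ ≤ γ/2 := min_le_left _ _
      linarith [hab.2]
    have h3 : σ^[j] u ≤ σ u := orbit_le hm (by linarith) j hj
    have := abs_lt.1 hju
    linarith [this.1]

lemma anti_return_fix {σ : ℝ → ℝ} (hσc : Continuous σ) (hm : Antitone σ)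
    {α β c η : ℝ} (hK : MapsTo σ (Icc α β) (Icc α β)) (hαβ : α ≤ β)
    (hJK : Icc (c-η) (c+η) ⊆ Icc α β) (hη : 0 < η)
    (hret : ∀ δ, 0 < δ → δ ≤ η → ∃ j, 1 ≤ j ∧ ∃ u, |u - c| < δ ∧ |σ^[j] u - c| < δ) :
    ∃ s, |s - c| ≤ η ∧ σ (σ s) = s := by
  by_contra hno
  push_neg at hno
  set R := fun t => σ (σ t) with hR
  have hRm : Monotone R := fun x y h => hm (hm h)
  have hRc : Continuous R := hσc.comp hσc
  have hR2 : ∀ (i : ℕ) (t : ℝ), σ^[2*i] t = R^[i] t := by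
    intro i t
    rw [Function.iterate_mul]
    have : σ^[2] = R := by
      funext s
      show σ^[2] s = σ (σ s)
      rw [show (2:ℕ) = 1 + 1 from rfl, Function.iterate_add_apply]
      simp
    rw [this]
  have hσα : α ≤ σ α := (hK (left_mem_Icc.2 hαβ)).1
  have hσβ : σ β ≤ β := (hK (right_mem_Icc.2 hαβ)).2
  obtain ⟨p, hpm, hp0⟩ := intermediate_value_Icc' hαβ
    ((hσc.sub continuous_id).continuousOn)
    (⟨by simp; linarith, by simp; linarith⟩ : (0:ℝ) ∈ Icc (σ β - β) (σ α - α))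
  have hp : σ p = p := by
    have : σ p - p = 0 := hp0
    linarith
  have hpR : R p = p := by show σ (σ p) = p; rw [hp, hp]
  have hpJ : ¬ |p - c| ≤ η := by
    intro h
    exact hno p h (by rw [hp, hp])
  have hodd : ∀ (i : ℕ) (u : ℝ), |u - c| < η → |σ (R^[i] u) - c| < η → False := by
    intro i u hu hw
    rcases lt_abs.1 (not_le.1 hpJ) with h | h
    · have hup : u ≤ p := by have := abs_lt.1 hu; linarith
      have hy : R^[i] u ≤ p := orbit_le_fix hRm hpR hup i
      have hwp : p ≤ σ (R^[i] u) := by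
        calc p = σ p := hp.symm
          _ ≤ σ (R^[i] u) := hm hy
      have := abs_lt.1 hw; linarith
    · have hup : p ≤ u := by have := abs_lt.1 hu; linarith
      have hy : p ≤ R^[i] u := orbit_ge_fix hRm hpR hup i
      have hwp : σ (R^[i] u) ≤ p := by
        calc σ (R^[i] u) ≤ σ p := hm hy
          _ = p := hp
      have := abs_lt.1 hw; linarith
  have hne : ∀ s ∈ Icc (c-η) (c+η), R s - s ≠ 0 := by
    intro s hs h0
    refine hno s (abs_le.2 ⟨by linarith [hs.1], by linarith [hs.2]⟩) ?_
    show σ (σ s) = s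
    simp only [hR] at h0
    linarith
  have hgc : Continuous (fun s => R s - s) := hRc.sub continuous_id
  rcases sign_const hgc hne with hpos | hneg
  · obtain ⟨t0, ht0m, ht0⟩ := isCompact_Icc.exists_isMinOn
      (⟨c, by constructor <;> linarith⟩ : (Icc (c-η) (c+η)).Nonempty) hgc.continuousOn
    rw [isMinOn_iff] at ht0
    set γ := R t0 - t0 with hγ
    have hγpos : 0 < γ := hpos t0 ht0m
    set δ := min (γ/2) η with hδ
    have hδpos : 0 < δ := lt_min (by linarith) hη
    have hδη : δ ≤ η := min_le_right _ _
    obtain ⟨j, hj, u, hu, hju⟩ := hret δ hδpos hδη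
    have huI : u ∈ Icc (c-η) (c+η) := by
      have := abs_lt.1 hu
      constructor <;> linarith [this.1, this.2]
    rcases Nat.even_or_odd j with ⟨i, rfl⟩ | ⟨i, rfl⟩
    · have hi : 1 ≤ i := by omega
      have hiter : σ^[i+i] u = R^[i] u := by
        rw [show i+i = 2*i by ring, hR2]
      have h1 : u + γ ≤ R u := by have := ht0 u huI; simp only [hγ]; linarith
      have h2 : c + δ < R u := by
        have hab := abs_lt.1 hu
        have hd1 : δ ≤ γ/2 := min_le_left _ _
        linarith [hab.1]
      have h3 : R u ≤ R^[i] u := orbit_ge hRm (by linarith) i hi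
      rw [hiter] at hju
      have := abs_lt.1 hju
      linarith [this.2]
    · have hiter : σ^[2*i+1] u = σ (R^[i] u) := by
        rw [Function.iterate_succ_apply', hR2]
      rw [hiter] at hju
      exact hodd i u (lt_of_lt_of_le hu hδη) (lt_of_lt_of_le hju hδη)
  · obtain ⟨t1, ht1m, ht1⟩ := isCompact_Icc.exists_isMaxOn
      (⟨c, by constructor <;> linarith⟩ : (Icc (c-η) (c+η)).Nonempty) hgc.continuousOn
    rw [isMaxOn_iff] at ht1
    set γ := -(R t1 - t1) with hγ
    have hγpos : 0 < γ := by have := hneg t1 ht1m; simp only [hγ]; linarith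
    set δ := min (γ/2) η with hδ
    have hδpos : 0 < δ := lt_min (by linarith) hη
    have hδη : δ ≤ η := min_le_right _ _
    obtain ⟨j, hj, u, hu, hju⟩ := hret δ hδpos hδη
    have huI : u ∈ Icc (c-η) (c+η) := by
      have := abs_lt.1 hu
      constructor <;> linarith [this.1, this.2]
    rcases Nat.even_or_odd j with ⟨i, rfl⟩ | ⟨i, rfl⟩
    · have hi : 1 ≤ i := by omega
      have hiter : σ^[i+i] u = R^[i] u := by
        rw [show i+i = 2*i by ring, hR2]
      have h1 : R u ≤ u - γ := by have := ht1 u huI; simp only [hγ]; linarith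
      have h2 : R u < c - δ := by
        have hab := abs_lt.1 hu
        have hd1 : δ ≤ γ/2 := min_le_left _ _
        linarith [hab.2]
      have h3 : R^[i] u ≤ R u := orbit_le hRm (by linarith) i hi
      rw [hiter] at hju
      have := abs_lt.1 hju
      linarith [this.1]
    · have hiter : σ^[2*i+1] u = σ (R^[i] u) := by
        rw [Function.iterate_succ_apply', hR2]
      rw [hiter] at hju
      exact hodd i u (lt_of_lt_of_le hu hδη) (lt_of_lt_of_le hju hδη)

end Interval

section Covering

lemma loc_inj {f : S1 → S1} (hcov : IsCoveringMap f) {F : ℝ → ℝ}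
    (hlift : ∀ x : ℝ, proj (F x) = f (proj x)) :
    ∀ τ : ℝ, ∃ δ > 0, InjOn F (ball τ δ) := by
  intro τ
  obtain ⟨U, hUopen, hUmem, hUinj⟩ := hcov.isLocalHomeomorph.isLocallyInjective (proj τ)
  have hnb : proj ⁻¹' U ∈ nhds τ := (hUopen.preimage proj_continuous).mem_nhds hUmem
  obtain ⟨δ0, hδ0, hball⟩ := Metric.mem_nhds_iff.1 hnb
  refine ⟨min δ0 (1/2), by positivity, ?_⟩
  intro s hs t ht hFst
  have hsU : proj s ∈ U := hball ((ball_subset_ball (min_le_left _ _)) hs)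
  have htU : proj t ∈ U := hball ((ball_subset_ball (min_le_left _ _)) ht)
  have heq : f (proj s) = f (proj t) := by rw [← hlift, ← hlift, hFst]
  have hpq : proj s = proj t := hUinj hsU htU heq
  apply proj_inj_of_close hpq
  have h1 : dist s τ < 1/2 := lt_of_lt_of_le (mem_ball.1 hs) (min_le_right _ _)
  have h2 : dist t τ < 1/2 := lt_of_lt_of_le (mem_ball.1 ht) (min_le_right _ _)
  rw [Real.dist_eq] at h1 h2
  rw [abs_sub_lt_iff] at h1 h2 ⊢
  constructor <;> linarith [h1.1, h1.2, h2.1, h2.2]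

lemma lift_iter {f : S1 → S1} {F : ℝ → ℝ}
    (hlift : ∀ x : ℝ, proj (F x) = f (proj x)) :
    ∀ (m : ℕ) (x : ℝ), proj (F^[m] x) = f^[m] (proj x) := by
  intro m
  induction m with
  | zero => intro x; simp
  | succ m ih =>
      intro x
      rw [Function.iterate_succ_apply', Function.iterate_succ_apply', hlift, ih]

lemma returns {f : S1 → S1} {x : S1} (hx : x ∈ nonwandering f) {F : ℝ → ℝ}
    (hlift : ∀ x : ℝ, proj (F x) = f (proj x)) {c : ℝ} (hc : proj c = x) :
    ∀ δ : ℝ, 0 < δ → ∃ m, 1 ≤ m ∧ ∃ u w : ℝ, |u - c| < δ ∧ |w - c| < δ ∧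
      ∃ k : ℤ, F^[m] u = w + k := by
  intro δ hδ
  have hU : proj '' (ball c δ) ∈ nhds x := by
    apply (proj_isOpenMap _ isOpen_ball).mem_nhds
    exact ⟨c, mem_ball_self hδ, hc⟩
  obtain ⟨m, hm, y, hy1, hy2⟩ := hx _ hU
  obtain ⟨z, hz, hzy⟩ := hy1
  obtain ⟨u, hu, hup⟩ := hz
  obtain ⟨w, hw, hwp⟩ := hy2
  have heq : proj (F^[m] u) = proj w := by
    rw [lift_iter hlift, hup, hzy, hwp]
  obtain ⟨k, hk⟩ := proj_eq_iff.1 heq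
  refine ⟨m, hm, u, w, ?_, ?_, -k, ?_⟩
  · rw [← Real.dist_eq]; exact mem_ball.1 hu
  · rw [← Real.dist_eq]; exact mem_ball.1 hw
  · rw [hk]; push_cast; ring

end Covering

end Aux

open Set Filter Function Metric Topology

set_option maxHeartbeats 2000000 in
/-- for a covering map of the circle of degree `d`, `|d|>1`, the
periodic points are dense in the nonwandering set. -/
theorem periodic_dense_in_nonwandering
    (d : ℤ) (hd : 1 < |d|)
    (f : S1 → S1) (hcov : IsCoveringMap f)
    (F : ℝ → ℝ) (hF : Continuous F)
    (hlift : ∀ x : ℝ, proj (F x) = f (proj x))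
    (hdeg : ∀ x : ℝ, F (x + 1) = F x + d) :
    nonwandering f ⊆ closure {p : S1 | ∃ n : ℕ, 1 ≤ n ∧ f^[n] p = p} := by
  classical
  intro x hx
  rw [mem_closure_iff_nhds]
  intro W hW
  obtain ⟨c, hc⟩ := QuotientAddGroup.mk_surjective x
  have hc' : proj c = x := hc
  have hWc : proj ⁻¹' W ∈ nhds c := by
    apply Aux.proj_continuous.continuousAt.preimage_mem_nhds
    rw [hc']; exact hW
  obtain ⟨ε, hε, hball⟩ := Metric.mem_nhds_iff.1 hWc
  obtain ⟨C, hC0, hC⟩ := Aux.exists_bound hF hdeg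
  have hloc := Aux.loc_inj hcov hlift
  have hinj := Aux.F_injective hF hloc
  have hdi := hF.strictMono_of_inj hinj
  have hsgn := Aux.F_sign hd hdeg hdi
  have hHc : Continuous (Aux.Hfun d F) := Aux.H_cont hd hF hC0 hC
  have hHm : Monotone (Aux.Hfun d F) := Aux.H_mono hd hC0 hC hsgn
  set H := Aux.Hfun d F with hH
  have hHsh : ∀ (k : ℤ) (t : ℝ), H (t + k) = H t + k :=
    fun k t => Aux.H_shift hd hC0 hC hdeg k t
  have hHsh' : ∀ (k : ℤ) (t : ℝ), H (t - k) = H t - k :=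
    fun k t => Aux.H_shift' hd hC0 hC hdeg k t
  have hHit : ∀ (m : ℕ) (t : ℝ), H (F^[m] t) = (d:ℝ)^m * H t :=
    fun m t => Aux.H_iter hd hC0 hC m t
  set a := c - ε/2 with ha
  set b := c + ε/2 with hb
  have hab : a ≤ b := by simp only [ha, hb]; linarith
  suffices hsuf : ∃ s : ℝ, |s - c| ≤ ε/2 ∧ ∃ m : ℕ, 1 ≤ m ∧ ∃ k : ℤ, F^[m] s = s + k by
    obtain ⟨s, hs, m, hm, k, hk⟩ := hsuf
    refine ⟨proj s, ⟨?_, m, hm, ?_⟩⟩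
    · apply hball
      rw [mem_ball, Real.dist_eq]
      linarith [hs]
    · rw [← Aux.lift_iter hlift, hk, Aux.proj_add_int]
  rcases lt_or_eq_of_le (hHm hab) with hAB | hAB
  · -- Case 1 : H is non-constant near c
    have hgap : 0 < H b - H a := by linarith
    have hd2 : (1:ℝ) < ((d:ℝ))^2 := by
      have h2 := Aux.habs hd
      nlinarith [sq_abs ((d:ℝ))]
    obtain ⟨M, hM⟩ := pow_unbounded_of_one_lt (1/(H b - H a) + 1) hd2
    have hDeq : ((d:ℝ)^2)^M = (d:ℝ)^(2*M) := by rw [← pow_mul]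
    set D := (d:ℝ)^(2*M) with hD
    rw [hDeq] at hM
    have hgap' : 0 < 1/(H b - H a) := by positivity
    have hD1 : 1 < D := by linarith
    have hM1 : 1 ≤ 2*M := by
      rcases Nat.eq_zero_or_pos M with rfl | h
      · norm_num [hD] at hD1
      · omega
    set K : ℤ := ⌊(H a) * (D-1)⌋ + 1 with hK
    set v : ℝ := K / (D - 1) with hv
    have hD1' : 0 < D - 1 := by linarith
    have hv1 : H a < v := by
      rw [hv, lt_div_iff₀ hD1']
      have := Int.lt_floor_add_one ((H a) * (D-1))
      push_cast [hK]
      push_cast at this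
      linarith
    have hv2 : v < H b := by
      have hKle : (K:ℝ) ≤ (H a) * (D-1) + 1 := by
        have := Int.floor_le ((H a) * (D-1))
        push_cast [hK]
        linarith
      have h1 : 1 < (H b - H a) * (D - 1) := by
        have h2 : 1/(H b - H a) < D - 1 := by linarith
        have h3 := (div_lt_iff₀ hgap).1 h2
        nlinarith [h3]
      rw [hv, div_lt_iff₀ hD1']
      nlinarith
    have hlev : (d:ℝ)^(2*M) * v = v + K := by
      have : (D - 1) * v = K := by
        rw [hv]; field_simp
      rw [← hD]
      linarith
    set Φ := H ⁻¹' {v} with hΦ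
    have hΦsub : Φ ⊆ Icc a b := by
      intro t ht
      have htv : H t = v := ht
      constructor
      · by_contra h
        push_neg at h
        have := hHm h.le
        rw [htv] at this
        linarith
      · by_contra h
        push_neg at h
        have := hHm h.le
        rw [htv] at this
        linarith
    have hΦne : Φ.Nonempty := by
      obtain ⟨t₀, ht₀m, ht₀⟩ := intermediate_value_Icc hab hHc.continuousOn
        ⟨hv1.le, hv2.le⟩
      exact ⟨t₀, ht₀⟩
    have hΦcl : IsClosed Φ := isClosed_singleton.preimage hHc
    have hbb : BddBelow Φ := ⟨a, fun t ht => (hΦsub ht).1⟩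
    have hba : BddAbove Φ := ⟨b, fun t ht => (hΦsub ht).2⟩
    set α := sInf Φ with hα
    set β' := sSup Φ with hβ'
    have hαm : α ∈ Φ := hΦcl.csInf_mem hΦne hbb
    have hβm : β' ∈ Φ := hΦcl.csSup_mem hΦne hba
    have hαβ : α ≤ β' := csInf_le_csSup hΦne hbb hba
    set T := fun t => F^[2*M] t - (K:ℝ) with hT
    have hTmaps : ∀ t, t ∈ Φ → T t ∈ Φ := by
      intro t ht
      have htv : H t = v := ht
      show H (T t) = v
      simp only [hT]
      rw [hHsh', hHit, htv, hlev]
      ring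
    have hTα : α ≤ T α := csInf_le hbb (hTmaps α hαm)
    have hTβ : T β' ≤ β' := le_csSup hba (hTmaps β' hβm)
    have hTc : Continuous (fun t => T t - t) :=
      ((hF.iterate _).sub continuous_const).sub continuous_id
    have hmem0 : (0:ℝ) ∈ Icc ((fun t => T t - t) β') ((fun t => T t - t) α) := by
      refine ⟨?_, ?_⟩
      · show T β' - β' ≤ 0; linarith
      · show 0 ≤ T α - α; linarith
    obtain ⟨s, hsm, hs0⟩ := intermediate_value_Icc' hαβ hTc.continuousOn hmem0
    have hsfix : F^[2*M] s = s + K := by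
      simp only [hT] at hs0
      linarith
    refine ⟨s, ?_, 2*M, hM1, K, hsfix⟩
    have h1 : a ≤ s := le_trans (hΦsub hαm).1 hsm.1
    have h2 : s ≤ b := le_trans hsm.2 (hΦsub hβm).2
    rw [abs_le]
    constructor <;> simp only [ha, hb] at h1 h2 <;> linarith
  · -- Case 2 : H is constant on [a,b]
    set v := H a with hva
    have hvc : ∀ t ∈ Icc a b, H t = v := by
      intro t ht
      have h1 := hHm ht.1
      have h2 := hHm ht.2
      rw [← hAB] at h2
      exact le_antisymm h2 h1
    set Φ := H ⁻¹' {v} with hΦ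
    have hcmem : c ∈ Icc a b := by
      constructor <;> simp only [ha, hb] <;> linarith
    have hΦsub : Φ ⊆ Icc (c-2) (c+2) := by
      intro t ht
      have htv : H t = v := ht
      have hHc1 : H (c - (1:ℤ)) = H c - 1 := by
        rw [hHsh']; norm_num
      have hHc2 : H (c + (1:ℤ)) = H c + 1 := by
        rw [hHsh]; norm_num
      have hHcv : H c = v := hvc c hcmem
      constructor
      · by_contra h
        push_neg at h
        have : t ≤ c - (1:ℤ) := by push_cast; linarith
        have := hHm this
        rw [htv, hHc1, hHcv] at this
        linarith
      · by_contra h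
        push_neg at h
        have : c + (1:ℤ) ≤ t := by push_cast; linarith
        have := hHm this
        rw [htv, hHc2, hHcv] at this
        linarith
    have hΦne : Φ.Nonempty := ⟨c, hvc c hcmem⟩
    have hΦcl : IsClosed Φ := isClosed_singleton.preimage hHc
    have hbb : BddBelow Φ := ⟨c-2, fun t ht => (hΦsub ht).1⟩
    have hba : BddAbove Φ := ⟨c+2, fun t ht => (hΦsub ht).2⟩
    set α := sInf Φ with hα
    set β' := sSup Φ with hβ'
    have hαm : α ∈ Φ := hΦcl.csInf_mem hΦne hbb
    have hβm : β' ∈ Φ := hΦcl.csSup_mem hΦne hba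
    have hαβ : α ≤ β' := csInf_le_csSup hΦne hbb hba
    have hIccΦ : Icc α β' ⊆ Φ := by
      intro t ht
      have h1 := hHm ht.1
      have h2 := hHm ht.2
      have hαv : H α = v := hαm
      have hβv : H β' = v := hβm
      show H t = v
      rw [hαv] at h1
      rw [hβv] at h2
      linarith
    have hΦIcc : Φ ⊆ Icc α β' := fun t ht => ⟨csInf_le hbb ht, le_csSup hba ht⟩
    have haΦ : a ∈ Φ := hvc a ⟨le_refl a, hab⟩
    have hbΦ : b ∈ Φ := hvc b ⟨hab, le_refl b⟩
    have hJsub : Icc (c-ε/4) (c+ε/4) ⊆ Icc α β' := by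
      intro t ht
      constructor
      · calc α ≤ a := csInf_le hbb haΦ
          _ ≤ t := by simp only [ha]; linarith [ht.1]
      · calc t ≤ b := by simp only [hb]; linarith [ht.2]
          _ ≤ β' := le_csSup hba hbΦ
    -- returns processed through H
    have hretP : ∀ δ, 0 < δ → δ ≤ ε/4 → ∃ m, 1 ≤ m ∧ ∃ k : ℤ,
        ((d:ℝ)^m * v = v + k) ∧ ∃ u, |u - c| < δ ∧ |(F^[m] u - k) - c| < δ := by
      intro δ hδ hδε
      obtain ⟨m, hm, u, w, hu, hw, k, hk⟩ := Aux.returns hx hlift hc' δ hδ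
      have huab : u ∈ Icc a b := by
        have := abs_lt.1 hu
        constructor <;> simp only [ha, hb] <;> linarith [this.1, this.2]
      have hwab : w ∈ Icc a b := by
        have := abs_lt.1 hw
        constructor <;> simp only [ha, hb] <;> linarith [this.1, this.2]
      have h1 : H (F^[m] u) = (d:ℝ)^m * v := by
        rw [hHit, hvc u huab]
      have h2 : H (F^[m] u) = v + k := by
        rw [hk, hHsh, hvc w hwab]
      refine ⟨m, hm, k, by rw [← h1, h2], u, hu, ?_⟩
      have he : F^[m] u - (k:ℝ) = w := by rw [hk]; ring
      rw [he]; exact hw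
    have hM0 : ∃ m, 1 ≤ m ∧ ∃ k : ℤ, (d:ℝ)^m * v = v + k := by
      obtain ⟨m, hm, k, hlev, _⟩ := hretP (ε/4) (by linarith) (le_refl _)
      exact ⟨m, hm, k, hlev⟩
    set n₀ := Nat.find hM0 with hn₀def
    obtain ⟨hn₀1, k₀, hk₀⟩ := Nat.find_spec hM0
    rw [← hn₀def] at hn₀1 hk₀
    set S := fun t => F^[n₀] t - (k₀:ℝ) with hS
    have hSc : Continuous S := (hF.iterate n₀).sub continuous_const
    have huniq : ∀ (k k' : ℤ) (m : ℕ), (d:ℝ)^m * v = v + k → (d:ℝ)^m * v = v + k' →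
        k = k' := by
      intro k k' m h1 h2
      have : (k:ℝ) = k' := by linarith
      exact_mod_cast this
    have hSlev : ∀ j, 1 ≤ j → ∃ kj : ℤ, ((d:ℝ)^(n₀*j) * v = v + kj) ∧
        ∀ t, S^[j] t = F^[n₀*j] t - kj := by
      intro j
      induction j with
      | zero => omega
      | succ j ih =>
          intro _
          rcases Nat.eq_zero_or_pos j with rfl | hj
          · refine ⟨k₀, ?_, ?_⟩
            · rw [show n₀*(0+1) = n₀ by ring]; exact hk₀
            · intro t
              rw [show n₀*(0+1) = n₀ by ring]
              simp [hS]
          · obtain ⟨kj, hlev, hit⟩ := ih hj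
            refine ⟨k₀ + kj * d^n₀, ?_, ?_⟩
            · have hexp : (d:ℝ)^(n₀*(j+1)) = (d:ℝ)^(n₀) * (d:ℝ)^(n₀*j) := by
                rw [← pow_add]; congr 1; ring
              rw [hexp]
              push_cast
              linear_combination ((d:ℝ)^(n₀)) * hlev + hk₀
            · intro t
              rw [Function.iterate_succ_apply' S j t, hit]
              show F^[n₀] (F^[n₀*j] t - (kj:ℝ)) - (k₀:ℝ) = _
              have he1 : F^[n₀*j] t - (kj:ℝ) = F^[n₀*j] t + ((-kj : ℤ):ℝ) := by
                push_cast; ring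
              rw [he1, Aux.Fiter_shift hdeg n₀ (-kj)]
              have he2 : F^[n₀] (F^[n₀*j] t) = F^[n₀*(j+1)] t := by
                rw [← Function.iterate_add_apply]
                congr 1
                ring
              rw [he2]
              push_cast; ring
    have hdvd : ∀ m, 1 ≤ m → (∃ k : ℤ, (d:ℝ)^m * v = v + k) → n₀ ∣ m := by
      intro m
      induction m using Nat.strong_induction_on with
      | _ m ih =>
        rintro hm1 ⟨k, hk⟩
        have hn₀le : n₀ ≤ m := Nat.find_min' hM0 ⟨hm1, k, hk⟩
        rcases eq_or_lt_of_le hn₀le with he | hlt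
        · exact he ▸ dvd_refl _
        · have h1 : 1 ≤ m - n₀ := by omega
          have hexp : (d:ℝ)^m = (d:ℝ)^(m - n₀) * (d:ℝ)^(n₀) := by
            rw [← pow_add]; congr 1; omega
          have hlev' : (d:ℝ)^(m-n₀) * v = v + ((k - d^(m-n₀) * k₀ : ℤ) : ℝ) := by
            rw [hexp] at hk
            push_cast
            linear_combination hk - ((d:ℝ)^(m-n₀)) * hk₀
          have hdvd' : n₀ ∣ (m - n₀) := ih (m - n₀) (by omega) h1 ⟨_, hlev'⟩
          obtain ⟨q, hq⟩ := hdvd'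
          have hm' : m = n₀ * q + n₀ := (Nat.sub_eq_iff_eq_add hn₀le).1 hq
          exact ⟨q + 1, by rw [hm']; ring⟩
    have hretS : ∀ δ, 0 < δ → δ ≤ ε/4 → ∃ j, 1 ≤ j ∧ ∃ u, |u - c| < δ ∧
        |S^[j] u - c| < δ := by
      intro δ hδ hδε
      obtain ⟨m, hm, k, hlev, u, hu, hFu⟩ := hretP δ hδ hδε
      obtain ⟨q, hq⟩ := hdvd m hm ⟨k, hlev⟩
      have hq1 : 1 ≤ q := by
        rcases Nat.eq_zero_or_pos q with rfl | h
        · omega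
        · omega
      obtain ⟨kj, hlevj, hit⟩ := hSlev q hq1
      have hkk : kj = k := by
        apply huniq kj k (n₀ * q)
        · exact hlevj
        · rw [← hq]; exact hlev
      refine ⟨q, hq1, u, hu, ?_⟩
      rw [hit u, hkk, ← hq]
      exact hFu
    have hε4 : 0 < ε/4 := by linarith
    rcases Aux.iter_sign hsgn n₀ with ⟨_, hmono⟩ | ⟨_, hanti⟩
    · -- S monotone
      have hSm : Monotone S := fun x' y' h => by
        simp only [hS]
        have := hmono h
        linarith
      obtain ⟨s, hs, hfix⟩ := Aux.mono_return_fix hSc hSm hε4 hretS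
      refine ⟨s, by linarith [hs], n₀, hn₀1, k₀, ?_⟩
      simp only [hS] at hfix
      linarith
    · -- S antitone
      have hSa : Antitone S := fun x' y' h => by
        simp only [hS]
        have := hanti h
        linarith
      have hmaps : MapsTo S (Icc α β') (Icc α β') := by
        intro t ht
        have htΦ : t ∈ Φ := hIccΦ ht
        have htv : H t = v := htΦ
        apply hΦIcc
        show H (S t) = v
        simp only [hS]
        rw [hHsh', hHit, htv, hk₀]
        ring
      obtain ⟨s, hs, hfix⟩ := Aux.anti_return_fix hSc hSa hmaps hαβ hJsub hε4 hretS
      obtain ⟨k₂, hlev₂, hit₂⟩ := hSlev 2 (by omega)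
      have hS2 : S^[2] s = S (S s) := by
        rw [show (2:ℕ) = 1 + 1 from rfl, Function.iterate_add_apply]
        simp
      refine ⟨s, by linarith [hs], n₀*2, by omega, k₂, ?_⟩
      have := hit₂ s
      rw [hS2, hfix] at this
      linarith
end
end

section
/- Let f be a continuous self-map of the closed annulus [0,1] × S¹ of degree d with |d| > 1. Then f is semiconjugate to m_d : S¹ → S¹; that is, there exists a continuous surjective map h : [0,1] × S¹ → S¹ with h∘f = m_d∘h and h inducing an isomorphism on first homology. -/
noncomputable section

/-- The closed annulus `Ā = [0,1] × S¹`. -/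
abbrev ClAnn := Set.Icc (0 : ℝ) 1 × S1

/-- Its universal cover `[0,1] × ℝ`. -/
abbrev ClAnnCov := Set.Icc (0 : ℝ) 1 × ℝ

/-- The covering projection of the closed annulus. -/
def cproj : ClAnnCov → ClAnn := fun p => (p.1, proj p.2)

namespace AnnAux

open Filter Topology

lemma proj_add_int (x : ℝ) (k : ℤ) : proj (x + k) = proj x := by
  have hk : proj (k : ℝ) = 0 := by
    refine (QuotientAddGroup.eq_zero_iff _).2 ?_
    exact AddSubgroup.mem_zmultiples_iff.2 ⟨k, by simp⟩
  show ((x + (k:ℝ) : ℝ) : S1) = (x : S1)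
  rw [AddCircle.coe_add]
  simpa [proj] using congrArg (fun t => (x : S1) + t) hk

lemma proj_zsmul (d : ℤ) (x : ℝ) : proj ((d : ℝ) * x) = md d (proj x) := by
  have : ((d • x : ℝ) : AddCircle (1:ℝ)) = d • (x : AddCircle (1:ℝ)) :=
    map_zsmul (QuotientAddGroup.mk' (AddSubgroup.zmultiples (1:ℝ))) d x
  simpa [proj, md, zsmul_eq_mul] using this

lemma proj_out (z : S1) : proj z.out = z := Quotient.out_eq' z

lemma out_sub_int (x : ℝ) : ∃ k : ℤ, (proj x).out = x + k := by
  have h : proj ((proj x).out) = proj x := proj_out _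
  have h2 : (proj x).out - x ∈ AddSubgroup.zmultiples (1:ℝ) :=
    QuotientAddGroup.eq_iff_sub_mem.1 h
  obtain ⟨k, hk⟩ := AddSubgroup.mem_zmultiples_iff.1 h2
  exact ⟨k, by simp at hk; linarith⟩

variable {d : ℤ} {F : ClAnnCov → ClAnnCov}

section Shift

variable (hdeg : ∀ (x : Set.Icc (0:ℝ) 1) (y : ℝ),
      (F (x, y + 1)).1 = (F (x, y)).1 ∧ (F (x, y + 1)).2 = (F (x, y)).2 + d)

include hdeg

lemma step_up (q : ClAnnCov) : F (q.1, q.2 + 1) = ((F q).1, (F q).2 + d) :=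
  Prod.ext (hdeg q.1 q.2).1 (hdeg q.1 q.2).2

lemma step_down (q : ClAnnCov) : F (q.1, q.2 - 1) = ((F q).1, (F q).2 - d) := by
  have h := step_up hdeg (q.1, q.2 - 1)
  simp only [sub_add_cancel] at h
  have h' : F q = ((F (q.1, q.2 - 1)).1, (F (q.1, q.2 - 1)).2 + d) := by
    calc F q = F (q.1, q.2) := by rw [Prod.mk.eta]
    _ = _ := h
  rw [h']
  simp

lemma shift (p : ClAnnCov) (k : ℤ) :
    F (p.1, p.2 + (k : ℝ)) = ((F p).1, (F p).2 + (k : ℝ) * d) := by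
  induction k using Int.induction_on with
  | zero => simp
  | succ k ih =>
    have e1 : p.2 + (((k : ℤ) + 1 : ℤ) : ℝ) = (p.2 + ((k : ℤ) : ℝ)) + 1 := by push_cast; ring
    have h := step_up hdeg (p.1, p.2 + ((k : ℤ) : ℝ))
    rw [e1, h, ih]
    refine Prod.ext rfl ?_
    push_cast; ring
  | pred k ih =>
    have e1 : p.2 + ((-(k:ℤ) - 1 : ℤ) : ℝ) = (p.2 + ((-(k:ℤ) : ℤ) : ℝ)) - 1 := by
      push_cast; ring
    have h := step_down hdeg (p.1, p.2 + ((-(k:ℤ) : ℤ) : ℝ))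
    rw [e1, h, ih]
    refine Prod.ext rfl ?_
    push_cast; ring

lemma iter_shift (n : ℕ) (p : ClAnnCov) (k : ℤ) :
    F^[n] (p.1, p.2 + (k : ℝ)) = ((F^[n] p).1, (F^[n] p).2 + (k : ℝ) * (d:ℝ) ^ n) := by
  induction n generalizing p k with
  | zero => simp
  | succ n ih =>
    rw [Function.iterate_succ_apply, Function.iterate_succ_apply]
    have h1 : F (p.1, p.2 + (k : ℝ)) = ((F p).1, (F p).2 + ((k * d : ℤ) : ℝ)) := by
      rw [shift hdeg p k]; push_cast; ring_nf
    rw [h1]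
    have h2 := ih (F p) (k * d)
    rw [h2]
    refine Prod.ext rfl ?_
    push_cast; ring

end Shift

/-- The rescaled iterates whose limit is the semiconjugacy lift. -/
def Hn (d : ℤ) (F : ClAnnCov → ClAnnCov) (n : ℕ) (p : ClAnnCov) : ℝ :=
  (F^[n] p).2 / (d : ℝ) ^ n

/-- The semiconjugacy lift `H : [0,1]×ℝ → ℝ`. -/
def Hlim (d : ℤ) (F : ClAnnCov → ClAnnCov) (p : ClAnnCov) : ℝ :=
  p.2 + ∑' n : ℕ, (Hn d F (n+1) p - Hn d F n p)

end AnnAux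

/-- a continuous self-map of the closed annulus of degree `d`,
`|d|>1`, is semiconjugate to `m_d : S¹ → S¹`: there is a continuous surjection
`h` with `h∘f = m_d∘h` inducing an isomorphism on first homology (i.e. lifting
to `H` with `H(x,y+1) = H(x,y) ± 1`). -/
theorem closed_annulus_semiconjugate
    (d : ℤ) (hd : 1 < |d|)
    (f : ClAnn → ClAnn) (hf : Continuous f)
    (F : ClAnnCov → ClAnnCov) (hF : Continuous F)
    (hliftF : ∀ p : ClAnnCov, cproj (F p) = f (cproj p))
    (hdeg : ∀ (x : Set.Icc (0:ℝ) 1) (y : ℝ),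
      (F (x, y + 1)).1 = (F (x, y)).1 ∧ (F (x, y + 1)).2 = (F (x, y)).2 + d) :
    ∃ h : ClAnn → S1, Continuous h ∧ Function.Surjective h ∧
      (∀ a, h (f a) = md d (h a)) ∧
      ∃ e : ℤ, (e = 1 ∨ e = -1) ∧ ∃ H : ClAnnCov → ℝ, Continuous H ∧
        (∀ p, proj (H p) = h (cproj p)) ∧
        ∀ (x : Set.Icc (0:ℝ) 1) (y : ℝ), H (x, y + 1) = H (x, y) + e := by
  classical
  open AnnAux Filter Topology in
  -- basic facts about d
  have hd' : (1:ℝ) < |(d:ℝ)| := by rw [← Int.cast_abs]; exact_mod_cast hd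
  have hdpos : (0:ℝ) < |(d:ℝ)| := lt_trans one_pos hd'
  have hd0 : (d:ℝ) ≠ 0 := fun h => by simp [h] at hdpos
  have hdn0 : ∀ n : ℕ, ((d:ℝ))^n ≠ 0 := fun n => pow_ne_zero n hd0
  -- the displacement function and its bound
  set g : ClAnnCov → ℝ := fun p => (F p).2 - (d:ℝ) * p.2 with hg
  have hgcont : Continuous g := (continuous_snd.comp hF).sub (continuous_const.mul continuous_snd)
  have hK : IsCompact ((Set.univ : Set (Set.Icc (0:ℝ) 1)) ×ˢ (Set.Icc (0:ℝ) 1)) :=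
    isCompact_univ.prod isCompact_Icc
  obtain ⟨C, hC⟩ := hK.exists_bound_of_continuousOn hgcont.continuousOn
  have hgper : ∀ p : ClAnnCov, ∀ k : ℤ, g (p.1, p.2 + (k:ℝ)) = g p := by
    intro p k
    simp only [hg]
    rw [shift hdeg p k]
    push_cast; ring
  have hgbound : ∀ p : ClAnnCov, |g p| ≤ |C| := by
    intro p
    have hmem : (p.1, Int.fract p.2) ∈
        ((Set.univ : Set (Set.Icc (0:ℝ) 1)) ×ˢ (Set.Icc (0:ℝ) 1)) := by
      refine Set.mem_prod.2 ⟨Set.mem_univ _, ⟨Int.fract_nonneg _, (Int.fract_lt_one _).le⟩⟩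
    have h1 := hC _ hmem
    have h2 : g (p.1, Int.fract p.2) = g p := by
      have : Int.fract p.2 = p.2 + ((-⌊p.2⌋ : ℤ) : ℝ) := by
        rw [← Int.self_sub_floor]; push_cast; ring
      rw [this, hgper p (-⌊p.2⌋)]
    rw [h2] at h1
    calc |g p| ≤ C := by simpa [Real.norm_eq_abs] using h1
    _ ≤ |C| := le_abs_self C
  -- the difference terms
  set D : ℕ → ClAnnCov → ℝ := fun n p => Hn d F (n+1) p - Hn d F n p with hD
  have hDeq : ∀ n p, D n p = g (F^[n] p) / (d:ℝ)^(n+1) := by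
    intro n p
    simp only [hD, Hn, hg, Function.iterate_succ_apply']
    field_simp
    ring
  set u : ℕ → ℝ := fun n => (|C| / |(d:ℝ)|) * (1 / |(d:ℝ)|)^n with hu
  have hDbound : ∀ n p, |D n p| ≤ u n := by
    intro n p
    have hun : u n = |C| / |(d:ℝ)| ^ (n+1) := by
      simp only [hu, div_pow, one_pow, div_mul_div_comm, mul_one, ← pow_succ']
    rw [hDeq, hun, abs_div, abs_pow]
    exact (div_le_div_iff_of_pos_right (pow_pos hdpos _)).2 (hgbound _)
  have husum : Summable u := by
    have hr1 : (0:ℝ) ≤ 1 / |(d:ℝ)| := by positivity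
    have hr2 : 1 / |(d:ℝ)| < 1 := by rw [div_lt_one hdpos]; exact hd'
    exact (summable_geometric_of_lt_one hr1 hr2).mul_left _
  have hDcont : ∀ n, Continuous (D n) := by
    intro n
    exact ((continuous_snd.comp (hF.iterate (n+1))).div_const _).sub
      ((continuous_snd.comp (hF.iterate n)).div_const _)
  -- continuity of H
  have Hcont : Continuous (Hlim d F) := by
    refine continuous_snd.add ?_
    exact continuous_tsum hDcont husum (fun n x => by
      simpa [Real.norm_eq_abs] using hDbound n x)
  -- pointwise convergence of Hn to Hlim
  have htend : ∀ p, Tendsto (fun n => Hn d F n p) atTop (𝓝 (Hlim d F p)) := by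
    intro p
    have hsum : Summable (fun n => D n p) :=
      Summable.of_norm_bounded husum (fun n => by
        simpa [Real.norm_eq_abs] using hDbound n p)
    have h1 := hsum.hasSum.tendsto_sum_nat
    have h2 : ∀ N, ∑ n ∈ Finset.range N, D n p = Hn d F N p - p.2 := by
      intro N
      rw [hD]
      rw [Finset.sum_range_sub (fun n => Hn d F n p) N]
      simp [Hn]
    simp only [h2] at h1
    have h3 := h1.add (tendsto_const_nhds (α := ℕ) (x := p.2) (f := atTop))
    simp only [sub_add_cancel] at h3
    simpa [Hlim, hD, add_comm] using h3
  -- functional equation H(F p) = d * H p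
  have HF : ∀ p, Hlim d F (F p) = (d:ℝ) * Hlim d F p := by
    intro p
    have t1 := htend (F p)
    have heq : ∀ n, Hn d F n (F p) = (d:ℝ) * Hn d F (n+1) p := by
      intro n
      simp only [Hn, ← Function.iterate_succ_apply]
      rw [pow_succ]
      field_simp
    simp only [heq] at t1
    have t2 : Tendsto (fun n => Hn d F (n+1) p) atTop (𝓝 (Hlim d F p)) :=
      (htend p).comp (tendsto_add_atTop_nat 1)
    exact tendsto_nhds_unique t1 (t2.const_mul _)
  -- integer shifts
  have Hshift : ∀ p : ClAnnCov, ∀ k : ℤ, Hlim d F (p.1, p.2 + (k:ℝ)) = Hlim d F p + k := by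
    intro p k
    have t1 := htend (p.1, p.2 + (k:ℝ))
    have heq : ∀ n, Hn d F n (p.1, p.2 + (k:ℝ)) = Hn d F n p + k := by
      intro n
      simp only [Hn, iter_shift hdeg n p k]
      field_simp
    simp only [heq] at t1
    have t2 : Tendsto (fun n => Hn d F n p + (k:ℝ)) atTop (𝓝 (Hlim d F p + k)) :=
      (htend p).add tendsto_const_nhds
    exact tendsto_nhds_unique t1 t2
  -- define h
  set h : ClAnn → S1 := fun a => proj (Hlim d F (a.1, a.2.out)) with hh
  have hcomm : ∀ p, h (cproj p) = proj (Hlim d F p) := by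
    intro p
    obtain ⟨k, hk⟩ := out_sub_int p.2
    simp only [hh, cproj]
    rw [hk, Hshift p k, proj_add_int]
  -- cproj is a quotient map
  have projcont : Continuous proj := continuous_quotient_mk'
  have qm : Topology.IsQuotientMap cproj := by
    have hopen : IsOpenMap cproj := by
      have : cproj = Prod.map id proj := rfl
      rw [this]
      exact IsOpenMap.id.prodMap (QuotientAddGroup.isOpenMap_coe)
    have hcont : Continuous cproj := continuous_fst.prodMk (projcont.comp continuous_snd)
    have hsurj : Function.Surjective cproj := by
      intro a
      exact ⟨(a.1, a.2.out), Prod.ext rfl (proj_out a.2)⟩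
    exact IsOpenMap.isQuotientMap hopen hcont hsurj
  have hcont : Continuous h := by
    rw [qm.continuous_iff]
    have : h ∘ cproj = fun p => proj (Hlim d F p) := funext hcomm
    rw [this]
    exact projcont.comp Hcont
  -- semiconjugacy
  have hsemi : ∀ a, h (f a) = md d (h a) := by
    intro a
    obtain ⟨p, rfl⟩ := qm.surjective a
    rw [← hliftF p, hcomm, hcomm, HF, proj_zsmul]
  -- surjectivity
  have hsurj : Function.Surjective h := by
    intro z
    set x0 : Set.Icc (0:ℝ) 1 := ⟨0, by norm_num⟩ with hx0
    set a := Hlim d F (x0, 0) with ha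
    have hb : Hlim d F (x0, 1) = a + 1 := by
      have := Hshift (x0, (0:ℝ)) 1
      simpa using this
    set r := z.out with hr
    set v := a + Int.fract (r - a) with hv
    have hcont1 : Continuous (fun t : ℝ => Hlim d F (x0, t)) :=
      Hcont.comp (Continuous.prodMk_right x0)
    have hv1 : v ∈ Set.Icc (Hlim d F (x0, 0)) (Hlim d F (x0, 1)) := by
      constructor
      · have h1 := Int.fract_nonneg (r - a)
        rw [← ha, hv]; linarith
      · have h1 := (Int.fract_lt_one (r - a)).le
        rw [hb, hv]; linarith
    obtain ⟨t, _, htv⟩ := intermediate_value_Icc zero_le_one hcont1.continuousOn hv1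
    refine ⟨cproj (x0, t), ?_⟩
    have htv' : Hlim d F (x0, t) = v := htv
    rw [hcomm, htv']
    have hvr : v = r + ((-⌊r - a⌋ : ℤ) : ℝ) := by
      rw [hv, ← Int.self_sub_floor]; push_cast; ring
    rw [hvr, proj_add_int, hr, proj_out]
  refine ⟨h, hcont, hsurj, hsemi, 1, Or.inl rfl, Hlim d F, Hcont, fun p => (hcomm p).symm, ?_⟩
  intro x y
  have := Hshift (x, y) 1
  simpa using this
end
end

section
/- Let f : A → A be a continuous map of the open annulus A = (0,1)×S¹ of degree d, |d| > 1, and let F : (0,1)×ℝ → (0,1)×ℝ be a lift of f. If sup over all (x₀,y₀) of |y₁ − d·y₀| is finite (where (x₁,y₁) = F(x₀,y₀)), then there exists a continuous H : (0,1)×ℝ → ℝ with H(x,y+1) = H(x,y)+1, H∘F = d·H, and sup |H(x,y) − y| < ∞. In particular f is semiconjugate to m_d on S¹. -/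
noncomputable section

/-- The open annulus `A = (0,1) × S¹`. -/
abbrev Ann := Set.Ioo (0 : ℝ) 1 × S1

/-- Its universal cover `(0,1) × ℝ`. -/
abbrev AnnCov := Set.Ioo (0 : ℝ) 1 × ℝ

/-- The covering projection of the open annulus. -/
def aproj : AnnCov → Ann := fun p => (p.1, proj p.2)

section Aux

variable (d : ℤ) (F : AnnCov → AnnCov)

/-- The displacement function. -/
def gfun : AnnCov → ℝ := fun p => (F p).2 - (d : ℝ) * p.2

/-- The semiconjugacy on the cover. -/
noncomputable def Hfun : AnnCov → ℝ :=
  fun p => p.2 + ∑' n : ℕ, gfun d F (F^[n] p) / (d : ℝ) ^ (n + 1)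

end Aux

lemma aproj_isOpenQuotientMap : IsOpenQuotientMap aproj := by
  have h1 : IsOpenQuotientMap (Prod.map (id : Set.Ioo (0:ℝ) 1 → Set.Ioo (0:ℝ) 1)
      (QuotientAddGroup.mk : ℝ → S1)) :=
    IsOpenQuotientMap.id.prodMap QuotientAddGroup.isOpenQuotientMap_mk
  exact h1

lemma proj_add_int (x : ℝ) (k : ℤ) : proj (x + k) = proj x := by
  unfold proj
  rw [QuotientAddGroup.eq_iff_sub_mem]
  exact ⟨k, by simp⟩

/-- if a lift `F` of a degree-`d` map `f` of the open annulus
satisfies `sup |y₁ − d·y₀| < ∞`, then there is a continuous `H` with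
`H(x,y+1) = H(x,y)+1`, `H∘F = d·H` and `sup |H(x,y) − y| < ∞`; in particular `f`
is semiconjugate to `m_d` on `S¹`. -/
theorem bounded_displacement_gives_semiconjugacy
    (d : ℤ) (hd : 1 < |d|)
    (f : Ann → Ann) (hf : Continuous f)
    (F : AnnCov → AnnCov) (hF : Continuous F)
    (hliftF : ∀ p : AnnCov, aproj (F p) = f (aproj p))
    (hdeg : ∀ (x : Set.Ioo (0:ℝ) 1) (y : ℝ),
      (F (x, y + 1)).1 = (F (x, y)).1 ∧ (F (x, y + 1)).2 = (F (x, y)).2 + d)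
    (hbd : ∃ M : ℝ, ∀ p : AnnCov, |(F p).2 - (d : ℝ) * p.2| ≤ M) :
    ∃ H : AnnCov → ℝ, Continuous H ∧
      (∀ (x : Set.Ioo (0:ℝ) 1) (y : ℝ), H (x, y + 1) = H (x, y) + 1) ∧
      (∀ p, H (F p) = (d : ℝ) * H p) ∧
      (∃ M : ℝ, ∀ p : AnnCov, |H p - p.2| ≤ M) ∧
      ∃ h : Ann → S1, Continuous h ∧ (∀ p : AnnCov, h (aproj p) = proj (H p)) ∧
        ∀ a, h (f a) = md d (h a) := by
  obtain ⟨M, hM⟩ := hbd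
  have hdR : (1 : ℝ) < |(d : ℝ)| := by exact_mod_cast hd
  have hdne : (d : ℝ) ≠ 0 := by
    intro h
    rw [h] at hdR
    norm_num at hdR
  have hM0 : 0 ≤ M := le_trans (abs_nonneg _) (hM (⟨⟨1/2, by norm_num⟩, 0⟩))
  -- shift lemma for F
  have hshift : ∀ (k : ℤ) (x : Set.Ioo (0:ℝ) 1) (y : ℝ),
      F (x, y + k) = ((F (x, y)).1, (F (x, y)).2 + (d : ℝ) * k) := by
    intro k
    induction k using Int.induction_on with
    | zero => intro x y; simp
    | succ n ih =>
      intro x y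
      have h1 : (y + ((n : ℤ) + 1 : ℤ) : ℝ) = (y + (n : ℤ)) + 1 := by push_cast; ring
      rw [h1]
      obtain ⟨h2, h3⟩ := hdeg x (y + (n : ℤ))
      rw [ih x y] at h2 h3
      refine Prod.ext h2 ?_
      rw [h3]; push_cast; ring
    | pred n ih =>
      intro x y
      have h1 : (y + (-(n : ℤ) - 1 : ℤ) : ℝ) + 1 = y + (-(n : ℤ) : ℤ) := by push_cast; ring
      obtain ⟨h2, h3⟩ := hdeg x (y + (-(n : ℤ) - 1 : ℤ))
      rw [h1, ih x y] at h2 h3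
      refine Prod.ext h2.symm ?_
      have := h3.symm
      rw [eq_sub_iff_add_eq.mpr this.symm] at *
      push_cast
      push_cast at h3
      linarith [h3]
  -- iterate shift
  have hiter : ∀ (n : ℕ) (x : Set.Ioo (0:ℝ) 1) (y : ℝ),
      F^[n] (x, y + 1) = ((F^[n] (x, y)).1, (F^[n] (x, y)).2 + (d : ℝ) ^ n) := by
    intro n
    induction n with
    | zero => intro x y; simp
    | succ n ih =>
      intro x y
      rw [Function.iterate_succ_apply', Function.iterate_succ_apply', ih x y]
      have h1 : ((F^[n] (x, y)).1, (F^[n] (x, y)).2 + (d : ℝ) ^ n)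
          = ((F^[n] (x, y)).1, (F^[n] (x, y)).2 + ((d ^ n : ℤ) : ℝ)) := by push_cast; rfl
      rw [h1]
      have h2 := hshift (d ^ n) (F^[n] (x, y)).1 (F^[n] (x, y)).2
      rw [show ((F^[n] (x, y)).1, (F^[n] (x, y)).2) = F^[n] (x, y) from rfl] at h2
      rw [h2]
      refine Prod.ext rfl ?_
      show (F (F^[n] (x, y))).2 + (d:ℝ) * ((d ^ n : ℤ) : ℝ) = (F (F^[n] (x, y))).2 + (d:ℝ) ^ (n+1)
      push_cast; ring
  -- invariance of g under deck transformation
  have hginv : ∀ (n : ℕ) (x : Set.Ioo (0:ℝ) 1) (y : ℝ),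
      gfun d F (F^[n] (x, y + 1)) = gfun d F (F^[n] (x, y)) := by
    intro n x y
    unfold gfun
    rw [hiter n x y]
    have h1 : F ((F^[n] (x, y)).1, (F^[n] (x, y)).2 + (d : ℝ) ^ n)
        = ((F (F^[n] (x, y))).1, (F (F^[n] (x, y))).2 + (d:ℝ) * ((d ^ n : ℤ) : ℝ)) := by
      have h2 := hshift (d ^ n) (F^[n] (x, y)).1 (F^[n] (x, y)).2
      rw [show ((F^[n] (x, y)).1, (F^[n] (x, y)).2) = F^[n] (x, y) from rfl] at h2
      rw [show ((F^[n] (x, y)).2 + (d : ℝ) ^ n) = ((F^[n] (x, y)).2 + ((d ^ n : ℤ) : ℝ)) by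
        push_cast; rfl]
      exact h2
    rw [h1]
    show (F (F^[n] (x, y))).2 + (d:ℝ) * ((d ^ n : ℤ) : ℝ)
        - (d:ℝ) * ((F^[n] (x, y)).2 + (d : ℝ) ^ n)
      = (F (F^[n] (x, y))).2 - (d:ℝ) * (F^[n] (x, y)).2
    push_cast; ring
  -- bound on terms
  have hgb : ∀ p : AnnCov, ∀ n : ℕ,
      ‖gfun d F (F^[n] p) / (d : ℝ) ^ (n + 1)‖ ≤ M * (|(d:ℝ)|⁻¹) ^ (n + 1) := by
    intro p n
    rw [Real.norm_eq_abs, abs_div, abs_pow]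
    rw [div_eq_mul_inv, ← inv_pow]
    exact mul_le_mul_of_nonneg_right (hM _) (by positivity)
  have hr0 : 0 ≤ |(d:ℝ)|⁻¹ := by positivity
  have hr1 : |(d:ℝ)|⁻¹ < 1 := by
    rw [inv_lt_one_iff₀]; right; exact hdR
  have hsumu : Summable (fun n : ℕ => M * (|(d:ℝ)|⁻¹) ^ (n + 1)) := by
    have := summable_geometric_of_lt_one hr0 hr1
    simpa [pow_succ, mul_comm, mul_assoc, mul_left_comm] using (this.mul_left (M * |(d:ℝ)|⁻¹))
  have hsum : ∀ p : AnnCov, Summable (fun n : ℕ => gfun d F (F^[n] p) / (d : ℝ) ^ (n + 1)) := by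
    intro p
    exact Summable.of_norm_bounded hsumu (hgb p)
  set H : AnnCov → ℝ := Hfun d F with hHdef
  have hHeq : ∀ p : AnnCov, H p = p.2 + ∑' n : ℕ, gfun d F (F^[n] p) / (d : ℝ) ^ (n + 1) :=
    fun p => rfl
  -- continuity
  have hgc : Continuous (gfun d F) := (continuous_snd.comp hF).sub (continuous_const.mul continuous_snd)
  have hHc : Continuous H := by
    rw [hHdef]
    unfold Hfun
    refine continuous_snd.add ?_
    refine continuous_tsum (fun n => ?_) hsumu (fun n p => hgb p n)
    exact (hgc.comp (hF.iterate n)).div_const _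
  -- periodicity
  have hHper : ∀ (x : Set.Ioo (0:ℝ) 1) (y : ℝ), H (x, y + 1) = H (x, y) + 1 := by
    intro x y
    rw [hHeq, hHeq]
    have : (fun n : ℕ => gfun d F (F^[n] (x, y + 1)) / (d : ℝ) ^ (n + 1))
        = fun n : ℕ => gfun d F (F^[n] (x, y)) / (d : ℝ) ^ (n + 1) := by
      funext n; rw [hginv n x y]
    show (y + 1) + _ = _
    rw [this]; ring
  -- semiconjugacy on cover
  have hHsemi : ∀ p : AnnCov, H (F p) = (d : ℝ) * H p := by
    intro p
    rw [hHeq, hHeq]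
    rw [mul_add, ← tsum_mul_left]
    have hsplit : ∑' n : ℕ, (d:ℝ) * (gfun d F (F^[n] p) / (d : ℝ) ^ (n + 1))
        = gfun d F p + ∑' n : ℕ, gfun d F (F^[n] (F p)) / (d : ℝ) ^ (n + 1) := by
      have heq : ∀ n : ℕ, (d:ℝ) * (gfun d F (F^[n] p) / (d : ℝ) ^ (n + 1))
          = gfun d F (F^[n] p) / (d : ℝ) ^ n := by
        intro n
        rw [pow_succ]
        field_simp
        try ring
      rw [tsum_congr heq]
      have hs : Summable (fun n : ℕ => gfun d F (F^[n] p) / (d : ℝ) ^ n) := by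
        have := (hsum p).mul_left (d : ℝ)
        exact this.congr heq
      rw [Summable.tsum_eq_zero_add hs]
      simp only [pow_zero, div_one]
      try rfl
      try (congr 1; exact tsum_congr fun n => by rw [Function.iterate_succ_apply])
    rw [hsplit]
    have : gfun d F p = (F p).2 - (d:ℝ) * p.2 := rfl
    rw [this]; ring
  -- boundedness
  have hHbd : ∀ p : AnnCov, |H p - p.2| ≤ M * |(d:ℝ)|⁻¹ / (1 - |(d:ℝ)|⁻¹) := by
    intro p
    rw [hHeq]
    have h1 : p.2 + (∑' n : ℕ, gfun d F (F^[n] p) / (d : ℝ) ^ (n + 1)) - p.2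
        = ∑' n : ℕ, gfun d F (F^[n] p) / (d : ℝ) ^ (n + 1) := by ring
    rw [h1, ← Real.norm_eq_abs]
    calc ‖∑' n : ℕ, gfun d F (F^[n] p) / (d : ℝ) ^ (n + 1)‖
        ≤ ∑' n : ℕ, M * (|(d:ℝ)|⁻¹) ^ (n + 1) := tsum_of_norm_bounded hsumu.hasSum (hgb p)
      _ = M * |(d:ℝ)|⁻¹ / (1 - |(d:ℝ)|⁻¹) := by
          have : (fun n : ℕ => M * (|(d:ℝ)|⁻¹) ^ (n + 1))
              = fun n : ℕ => (M * |(d:ℝ)|⁻¹) * (|(d:ℝ)|⁻¹) ^ n := by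
            funext n; rw [pow_succ]; ring
          rw [this, tsum_mul_left, tsum_geometric_of_lt_one hr0 hr1]
          field_simp
  -- integer periodicity of H
  have hHperZ : ∀ (k : ℤ) (x : Set.Ioo (0:ℝ) 1) (y : ℝ), H (x, y + k) = H (x, y) + k := by
    intro k
    induction k using Int.induction_on with
    | zero => intro x y; simp
    | succ n ih =>
      intro x y
      have h1 : (y + ((n : ℤ) + 1 : ℤ) : ℝ) = (y + (n : ℤ)) + 1 := by push_cast; ring
      rw [h1, hHper x (y + (n:ℤ)), ih x y]
      push_cast; ring
    | pred n ih =>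
      intro x y
      have h1 : (y + (-(n : ℤ) - 1 : ℤ) : ℝ) + 1 = y + (-(n : ℤ) : ℤ) := by push_cast; ring
      have h2 := hHper x (y + (-(n : ℤ) - 1 : ℤ))
      rw [h1, ih x y] at h2
      push_cast
      push_cast at h2
      linarith [h2]
  -- descend to the annulus
  have hfiber : ∀ p q : AnnCov, aproj p = aproj q → proj (H p) = proj (H q) := by
    intro p q hpq
    have h1 : p.1 = q.1 := congrArg (fun a : Ann => a.1) hpq
    have h2 : proj p.2 = proj q.2 := congrArg (fun a : Ann => a.2) hpq
    have h3 : ∃ k : ℤ, q.2 = p.2 + k := by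
      unfold proj at h2
      rw [QuotientAddGroup.eq_iff_sub_mem] at h2
      obtain ⟨k, hk⟩ := h2
      refine ⟨-k, ?_⟩
      simp only [zsmul_eq_mul, mul_one] at hk
      push_cast
      linarith [hk]
    obtain ⟨k, hk⟩ := h3
    have h4 : q = (p.1, p.2 + (k : ℝ)) := Prod.ext h1.symm hk
    rw [h4, hHperZ k p.1 p.2, proj_add_int]
  obtain ⟨sec, hsec⟩ := aproj_isOpenQuotientMap.surjective.hasRightInverse
  set h : Ann → S1 := fun a => proj (H (sec a)) with hhdef
  have hlift : ∀ p : AnnCov, h (aproj p) = proj (H p) := by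
    intro p
    exact hfiber (sec (aproj p)) p (by rw [hsec (aproj p)])
  have hhc : Continuous h := by
    rw [← aproj_isOpenQuotientMap.continuous_comp_iff]
    have : h ∘ aproj = fun p => proj (H p) := funext hlift
    rw [this]
    exact (AddCircle.continuous_mk' 1).comp hHc
  refine ⟨H, hHc, hHper, hHsemi, ⟨_, hHbd⟩, h, hhc, hlift, ?_⟩
  intro a
  obtain ⟨p, rfl⟩ := aproj_isOpenQuotientMap.surjective a
  rw [← hliftF, hlift, hlift, hHsemi]
  show proj ((d:ℝ) * H p) = d • proj (H p)
  unfold proj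
  rw [← zsmul_eq_mul]
  exact QuotientAddGroup.mk_zsmul (AddSubgroup.zmultiples (1:ℝ)) (H p) d
end
end
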